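/- arXiv:1609.07684 — 7 statements merged into one kernel-verified Lean document; each statement's English description precedes it below -/
import Mathlib

section
/- If a formula φ of LKvr is derivable in the proof system SLKvr, then φ is valid on the class K of all models, i.e., M,s ⊨ φ for every model M in K and every world s of M. -/
/-- Formulas of the language LKvr: ⊤, proposition letters, ¬, ∧, □_i, ∇_i(·,d).
Proposition letters, agents, and constant symbols are all drawn from ℕ
(countably infinite sets). -/
inductive Formula : Type
  | top : Formula
  | atom : ℕ → Formula
  | neg : Formula → Formula
  | and : Formula → Formula → Formula
  | box : ℕ → Formula → Formula
  | nabla : ℕ → Formula → ℕ → Formula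
  deriving DecidableEq

namespace Formula

/-- ⊥ := ¬⊤ -/
def bot : Formula := neg top
/-- φ∨ψ := ¬(¬φ∧¬ψ) -/
def or (φ ψ : Formula) : Formula := neg (and (neg φ) (neg ψ))
/-- φ→ψ := ¬(φ∧¬ψ) -/
def imp (φ ψ : Formula) : Formula := neg (and φ (neg ψ))
/-- ◇_iφ := ¬□_i¬φ -/
def dia (i : ℕ) (φ : Formula) : Formula := neg (box i (neg φ))
/-- φ↔ψ := (φ→ψ)∧(ψ→φ) -/
def iff (φ ψ : Formula) : Formula := and (imp φ ψ) (imp ψ φ)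

/-- `subst ψ χ φ` is φ[ψ/χ]: the result of replacing every (outermost)
occurrence of ψ as a subformula of φ by χ. -/
def subst (ψ χ : Formula) : Formula → Formula
  | top => if top = ψ then χ else top
  | atom p => if atom p = ψ then χ else atom p
  | neg α => if neg α = ψ then χ else neg (subst ψ χ α)
  | and α β => if and α β = ψ then χ else and (subst ψ χ α) (subst ψ χ β)
  | box i α => if box i α = ψ then χ else box i (subst ψ χ α)
  | nabla i α d => if nabla i α d = ψ then χ else nabla i (subst ψ χ α) d

end Formula

/-- φ is an instance of a propositional tautology: it is true under every
assignment of truth values that respects ⊤, ¬ and ∧. -/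
def Taut (φ : Formula) : Prop :=
  ∀ v : Formula → Prop,
    v Formula.top →
    (∀ ψ, v (Formula.neg ψ) ↔ ¬ v ψ) →
    (∀ ψ χ, v (Formula.and ψ χ) ↔ (v ψ ∧ v χ)) →
    v φ

/-- Derivability in the proof system SLKvr. -/
inductive Derivable : Formula → Prop
  | taut {φ : Formula} : Taut φ → Derivable φ
  | axK (i : ℕ) (φ ψ : Formula) :
      Derivable ((Formula.box i (φ.imp ψ)).imp ((Formula.box i φ).imp (Formula.box i ψ)))
  | distNsv (i : ℕ) (φ ψ : Formula) (d : ℕ) :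
      Derivable ((Formula.box i (φ.imp ψ)).imp ((Formula.nabla i ψ d).imp (Formula.nabla i φ d)))
  | nsvBot (i d : ℕ) : Derivable (Formula.nabla i Formula.bot d)
  | nsvOr (i : ℕ) (φ ψ : Formula) (d : ℕ) :
      Derivable ((((Formula.dia i (φ.and ψ)).and (Formula.nabla i φ d)).and
        (Formula.nabla i ψ d)).imp (Formula.nabla i (φ.or ψ) d))
  | mp {φ ψ : Formula} : Derivable (φ.imp ψ) → Derivable φ → Derivable ψ
  | nec {φ : Formula} (i : ℕ) : Derivable φ → Derivable (Formula.box i φ)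
  | re {ψ χ : Formula} (φ : Formula) :
      Derivable (ψ.iff χ) → Derivable (φ.iff (Formula.subst ψ χ φ))

/-- A Kripke model with values: worlds W, values O, relations R_i,
propositional valuation V and value assignment VD. -/
structure Model where
  W : Type
  O : Type
  R : ℕ → W → W → Prop
  V : ℕ → W → Prop
  VD : ℕ → W → O

/-- Membership in the class K of all models: the sets of worlds and of values
are nonempty. -/
def Model.inK (M : Model) : Prop := Nonempty M.W ∧ Nonempty M.O

/-- Satisfaction. -/
def Sat (M : Model) : M.W → Formula → Prop
  | _, Formula.top => True
  | s, Formula.atom p => M.V p s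
  | s, Formula.neg φ => ¬ Sat M s φ
  | s, Formula.and φ ψ => Sat M s φ ∧ Sat M s ψ
  | s, Formula.box i φ => ∀ t, M.R i s t → Sat M t φ
  | s, Formula.nabla i φ d =>
      ∀ t₁ t₂, M.R i s t₁ → M.R i s t₂ → Sat M t₁ φ → Sat M t₂ φ →
        M.VD d t₁ = M.VD d t₂

/-- Validity on the class K of all models. -/
def Valid (φ : Formula) : Prop := ∀ M : Model, M.inK → ∀ s : M.W, Sat M s φ

/-- Conjunction of a nonempty list of formulas (φ₁∧…∧φₙ). -/
def conj : List Formula → Formula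
  | [] => Formula.top
  | [φ] => φ
  | φ :: ψ :: l => φ.and (conj (ψ :: l))

/-- Γ is consistent w.r.t. SLKvr: there is no finite subset {φ₁,…,φₙ} ⊆ Γ
(n ≥ 1) such that ¬(φ₁∧…∧φₙ) is derivable. -/
def Consistent (Γ : Set Formula) : Prop :=
  ¬ ∃ l : List Formula, l ≠ [] ∧ (∀ φ ∈ l, φ ∈ Γ) ∧ Derivable (Formula.neg (conj l))

/-- Maximal consistent set: consistent, and every proper superset is
inconsistent. -/
def MCS (Γ : Set Formula) : Prop :=
  Consistent Γ ∧ ∀ Δ : Set Formula, Γ ⊂ Δ → ¬ Consistent Δ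

/-- φ is derivable from Γ: there is a finite subset {ψ₁,…,ψₙ} ⊆ Γ with
(ψ₁∧…∧ψₙ)→φ derivable in SLKvr. -/
def DerivableFrom (Γ : Set Formula) (φ : Formula) : Prop :=
  ∃ l : List Formula, (∀ ψ ∈ l, ψ ∈ Γ) ∧ Derivable ((conj l).imp φ)

/-- A world of the canonical model of SLKvr: a triple ⟨Γ,f,g⟩ with Γ an MCS,
f : D → ℕ, g : Ag×LKvr×D → ℕ∪{*} (with `none` playing the role of *)
satisfying conditions (1) and (2). -/
structure CWorld where
  Γ : Set Formula
  f : ℕ → ℕ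
  g : ℕ → Formula → ℕ → Option ℕ
  mcs : MCS Γ
  cond1 : ∀ i φ d, g i φ d ≠ none ↔ (Formula.nabla i φ d).and (Formula.dia i φ) ∈ Γ
  cond2 : ∀ i φ ψ d, g i φ d ≠ none → g i ψ d ≠ none →
      (g i φ d = g i ψ d ↔ Formula.nabla i (φ.or ψ) d ∈ Γ)

/-- The canonical relation: s R_i t iff (3) {φ : □_iφ ∈ Γ_s} ⊆ Γ_t and
(4) whenever ∇_i(φ,d) ∈ Γ_s and φ ∈ Γ_t, then f_t(d) = g_s(i,φ,d). -/
def CRel (i : ℕ) (s t : CWorld) : Prop :=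
  (∀ φ, Formula.box i φ ∈ s.Γ → φ ∈ t.Γ) ∧
  (∀ φ d, Formula.nabla i φ d ∈ s.Γ → φ ∈ t.Γ → s.g i φ d = some (t.f d))

/-- The canonical model of SLKvr. -/
def CModel : Model where
  W := CWorld
  O := ℕ
  R := CRel
  V := fun p s => Formula.atom p ∈ s.Γ
  VD := fun d s => s.f d

lemma sat_neg (M : Model) (s : M.W) (φ : Formula) :
    Sat M s (Formula.neg φ) ↔ ¬ Sat M s φ := Iff.rfl

lemma sat_and (M : Model) (s : M.W) (φ ψ : Formula) :
    Sat M s (Formula.and φ ψ) ↔ (Sat M s φ ∧ Sat M s ψ) := Iff.rfl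

lemma sat_imp (M : Model) (s : M.W) (φ ψ : Formula) :
    Sat M s (φ.imp ψ) ↔ (Sat M s φ → Sat M s ψ) := by
  simp only [Formula.imp, sat_neg, sat_and]; tauto

lemma sat_or (M : Model) (s : M.W) (φ ψ : Formula) :
    Sat M s (φ.or ψ) ↔ (Sat M s φ ∨ Sat M s ψ) := by
  simp only [Formula.or, sat_neg, sat_and]; tauto

lemma sat_iff (M : Model) (s : M.W) (φ ψ : Formula) :
    Sat M s (φ.iff ψ) ↔ (Sat M s φ ↔ Sat M s ψ) := by
  simp only [Formula.iff, sat_and, sat_imp]; tauto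

lemma sat_dia (M : Model) (s : M.W) (i : ℕ) (φ : Formula) :
    Sat M s (Formula.dia i φ) ↔ ∃ t, M.R i s t ∧ Sat M t φ := by
  simp only [Formula.dia, sat_neg, Sat]; push_neg; rfl

lemma sat_subst {ψ χ : Formula} (h : Valid (ψ.iff χ)) (M : Model) (hM : M.inK)
    (φ : Formula) (s : M.W) : Sat M s φ ↔ Sat M s (Formula.subst ψ χ φ) := by
  have key : ∀ s : M.W, Sat M s ψ ↔ Sat M s χ :=
    fun s => (sat_iff M s ψ χ).mp (h M hM s)
  induction φ generalizing s with
  | top =>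
    simp only [Formula.subst]
    split
    · next heq => rw [heq]; exact key s
    · exact Iff.rfl
  | atom p =>
    simp only [Formula.subst]
    split
    · next heq => rw [heq]; exact key s
    · exact Iff.rfl
  | neg α ih =>
    simp only [Formula.subst]
    split
    · next heq => rw [heq]; exact key s
    · simp only [sat_neg]; exact not_congr (ih s)
  | and α β ih1 ih2 =>
    simp only [Formula.subst]
    split
    · next heq => rw [heq]; exact key s
    · simp only [sat_and]; exact and_congr (ih1 s) (ih2 s)
  | box i α ih =>
    simp only [Formula.subst]
    split
    · next heq => rw [heq]; exact key s
    · show (∀ t, M.R i s t → Sat M t α) ↔ _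
      exact forall_congr' fun t => imp_congr Iff.rfl (ih t)
  | nabla i α d ih =>
    simp only [Formula.subst]
    split
    · next heq => rw [heq]; exact key s
    · show (∀ t₁ t₂, M.R i s t₁ → M.R i s t₂ → Sat M t₁ α → Sat M t₂ α → _) ↔ _
      constructor
      · intro H t₁ t₂ h1 h2 hs1 hs2
        exact H t₁ t₂ h1 h2 ((ih t₁).mpr hs1) ((ih t₂).mpr hs2)
      · intro H t₁ t₂ h1 h2 hs1 hs2
        exact H t₁ t₂ h1 h2 ((ih t₁).mp hs1) ((ih t₂).mp hs2)

/-- Soundness: every SLKvr-derivable formula is valid on the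
class K of all models. -/
theorem slkvr_soundness (φ : Formula) (h : Derivable φ) : Valid φ := by
  induction h with
  | taut ht =>
    intro M hM s
    exact ht (Sat M s) trivial (fun ψ => Iff.rfl) (fun ψ χ => Iff.rfl)
  | axK i φ ψ =>
    intro M hM s
    rw [sat_imp, sat_imp]
    intro h1 h2 t hrt
    exact (sat_imp M t φ ψ).mp (h1 t hrt) (h2 t hrt)
  | distNsv i φ ψ d =>
    intro M hM s
    rw [sat_imp, sat_imp]
    intro h1 h2 t₁ t₂ hr1 hr2 hs1 hs2
    exact h2 t₁ t₂ hr1 hr2 ((sat_imp M t₁ φ ψ).mp (h1 t₁ hr1) hs1)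
      ((sat_imp M t₂ φ ψ).mp (h1 t₂ hr2) hs2)
  | nsvBot i d =>
    intro M hM s t₁ t₂ _ _ hs1 _
    exact absurd trivial hs1
  | nsvOr i φ ψ d =>
    intro M hM s
    rw [sat_imp]
    rintro ⟨⟨hdia, hnφ⟩, hnψ⟩ t₁ t₂ hr1 hr2 hs1 hs2
    obtain ⟨u, hru, huφ, huψ⟩ : ∃ u, M.R i s u ∧ Sat M u φ ∧ Sat M u ψ := by
      obtain ⟨u, hru, hu⟩ := (sat_dia M s i (φ.and ψ)).mp hdia
      exact ⟨u, hru, hu⟩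
    have key : ∀ t, M.R i s t → Sat M t (φ.or ψ) → M.VD d t = M.VD d u := by
      intro t hrt hst
      rcases (sat_or M t φ ψ).mp hst with h | h
      · exact hnφ t u hrt hru h huφ
      · exact hnψ t u hrt hru h huψ
    rw [key t₁ hr1 hs1, key t₂ hr2 hs2]
  | mp _ _ ih1 ih2 =>
    intro M hM s
    exact (sat_imp M s _ _).mp (ih1 M hM s) (ih2 M hM s)
  | nec i _ ih =>
    intro M hM s t hrt
    exact ih M hM t
  | re φ _ ih =>
    intro M hM s
    exact (sat_iff M s _ _).mpr (sat_subst ih M hM φ s)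
end

section
/- Every instance of the schema NSVOR, namely ◇_i(φ∧ψ) ∧ ∇_i(φ,d) ∧ ∇_i(ψ,d) → ∇_i(φ∨ψ,d), is valid on the class K of all models. -/
/-- every instance of NSVOR,
◇_i(φ∧ψ) ∧ ∇_i(φ,d) ∧ ∇_i(ψ,d) → ∇_i(φ∨ψ,d), is valid on the class K. -/
theorem nsvOr_valid (i : ℕ) (φ ψ : Formula) (d : ℕ) :
    Valid ((((Formula.dia i (φ.and ψ)).and (Formula.nabla i φ d)).and
      (Formula.nabla i ψ d)).imp (Formula.nabla i (φ.or ψ) d)) := by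
  intro M _ s
  simp only [Formula.imp, Formula.dia, Formula.or, Sat, not_and, not_not, not_forall]
  rintro ⟨⟨hdia, hφ⟩, hψ⟩
  obtain ⟨u, hRu, huφ, huψ⟩ := hdia
  rintro ⟨t₁, t₂, h1, h2, hs1, hs2, hne⟩
  apply hne
  have key : ∀ t, M.R i s t → (¬ Sat M t φ → Sat M t ψ) → M.VD d t = M.VD d u := by
    intro t ht hst
    by_cases h : Sat M t φ
    · exact hφ t u ht hRu h huφ
    · exact hψ t u ht hRu (hst h) huψ
  rw [key t₁ h1 hs1, key t₂ h2 hs2]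
end

section
/- For all LKvr formulas φ, ψ, χ, every agent i, and every constant symbol d, the formula ◇_iψ ∧ ∇_i(φ∨ψ,d) ∧ ∇_i(ψ∨χ,d) → ∇_i(φ∨χ,d) is derivable in the proof system SLKvr. -/
/-- Contraposition: from ⊢ φ→ψ infer ⊢ ¬ψ→¬φ. -/
lemma derivable_contra {φ ψ : Formula} (h : Derivable (φ.imp ψ)) :
    Derivable ((ψ.neg).imp (φ.neg)) := by
  refine Derivable.mp (Derivable.taut ?_) h
  intro v hT hN hA
  simp only [Formula.imp, hN, hA]
  tauto

/-- ◇ monotonicity: from ⊢ φ→ψ infer ⊢ ◇_iφ→◇_iψ. -/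
lemma derivable_dia_mono (i : ℕ) {φ ψ : Formula} (h : Derivable (φ.imp ψ)) :
    Derivable ((Formula.dia i φ).imp (Formula.dia i ψ)) := by
  have h1 : Derivable ((ψ.neg).imp (φ.neg)) := derivable_contra h
  have h2 : Derivable (Formula.box i ((ψ.neg).imp (φ.neg))) := Derivable.nec i h1
  have h3 : Derivable ((Formula.box i (ψ.neg)).imp (Formula.box i (φ.neg))) :=
    Derivable.mp (Derivable.axK i _ _) h2
  exact derivable_contra h3

/-- ◇_iψ ∧ ∇_i(φ∨ψ,d) ∧ ∇_i(ψ∨χ,d) → ∇_i(φ∨χ,d) is derivable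
in SLKvr. -/
theorem nabla_transitivity_derivable (φ ψ χ : Formula) (i d : ℕ) :
    Derivable ((((Formula.dia i ψ).and (Formula.nabla i (φ.or ψ) d)).and
      (Formula.nabla i (ψ.or χ) d)).imp (Formula.nabla i (φ.or χ) d)) := by
  set α := (φ.or ψ).and (ψ.or χ) with hα
  -- ⊢ ◇ψ → ◇α
  have hA : Derivable ((Formula.dia i ψ).imp (Formula.dia i α)) := by
    apply derivable_dia_mono
    apply Derivable.taut
    intro v hT hN hAnd
    simp only [hα, Formula.imp, Formula.or, hN, hAnd]
    tauto
  -- ⊢ (◇α ∧ ∇(φ∨ψ)) ∧ ∇(ψ∨χ) → ∇((φ∨ψ)∨(ψ∨χ))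
  have hB := Derivable.nsvOr i (φ.or ψ) (ψ.or χ) d
  -- ⊢ ∇((φ∨ψ)∨(ψ∨χ)) → ∇(φ∨χ)
  have hC : Derivable ((Formula.nabla i ((φ.or ψ).or (ψ.or χ)) d).imp
      (Formula.nabla i (φ.or χ) d)) := by
    have ht : Derivable ((φ.or χ).imp ((φ.or ψ).or (ψ.or χ))) := by
      apply Derivable.taut
      intro v hT hN hAnd
      simp only [Formula.imp, Formula.or, hN, hAnd]
      tauto
    exact Derivable.mp (Derivable.distNsv i _ _ d) (Derivable.nec i ht)
  -- Glue propositionally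
  have hglue : Derivable (((Formula.dia i ψ).imp (Formula.dia i α)).imp
      ((((((Formula.dia i α).and (Formula.nabla i (φ.or ψ) d)).and
        (Formula.nabla i (ψ.or χ) d)).imp (Formula.nabla i ((φ.or ψ).or (ψ.or χ)) d))).imp
      (((Formula.nabla i ((φ.or ψ).or (ψ.or χ)) d).imp (Formula.nabla i (φ.or χ) d)).imp
      ((((Formula.dia i ψ).and (Formula.nabla i (φ.or ψ) d)).and
        (Formula.nabla i (ψ.or χ) d)).imp (Formula.nabla i (φ.or χ) d))))) := by
    apply Derivable.taut
    intro v hT hN hAnd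
    simp only [Formula.imp, Formula.dia, hN, hAnd]
    tauto
  exact Derivable.mp (Derivable.mp (Derivable.mp hglue hA) hB) hC
end

section
/- Let Γ be a maximal consistent set with respect to SLKvr, let i be an agent and d a constant symbol, and let G(i,d) = {φ : ∇_i(φ,d)∧◇_iφ ∈ Γ}. Define φ ~ ψ for φ,ψ ∈ G(i,d) iff ∇_i(φ∨ψ,d) ∈ Γ. Then ~ is an equivalence relation on G(i,d) (reflexive, symmetric, and transitive). -/
section Aux

open Formula

/-- taut helper: compose implications -/
lemma imp_trans' {a b c : Formula} (h1 : Derivable (a.imp b)) (h2 : Derivable (b.imp c)) :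
    Derivable (a.imp c) := by
  have t : Taut ((a.imp b).imp ((b.imp c).imp (a.imp c))) := by
    intro v hT hN hA
    simp only [Formula.imp, hN, hA]
    tauto
  exact ((Derivable.taut t).mp h1).mp h2

lemma conj_proj : ∀ (l : List Formula) (α : Formula), α ∈ l → Derivable ((conj l).imp α)
  | [β], α, h => by
      simp only [List.mem_singleton] at h
      subst h
      refine Derivable.taut ?_
      intro v hT hN hA
      simp only [Formula.imp, conj, hN, hA]
      tauto
  | β :: γ :: t, α, h => by
      rcases List.mem_cons.mp h with h | h
      · subst h
        refine Derivable.taut ?_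
        intro v hT hN hA
        simp only [Formula.imp, conj, hN, hA]
        tauto
      · have ih := conj_proj (γ :: t) α h
        have step : Derivable ((conj (β :: γ :: t)).imp (conj (γ :: t))) := by
          refine Derivable.taut ?_
          intro v hT hN hA
          simp only [Formula.imp, conj, hN, hA]
          tauto
        exact imp_trans' step ih

lemma conj_intro : ∀ (m : List Formula) (c : Formula),
    (∀ α ∈ m, Derivable (c.imp α)) → Derivable (c.imp (conj m))
  | [], c, _ => by
      refine Derivable.taut ?_
      intro v hT hN hA
      simp only [Formula.imp, conj, hN, hA]
      tauto
  | [β], c, h => h β (by simp)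
  | β :: γ :: t, c, h => by
      have h1 := h β (by simp)
      have h2 := conj_intro (γ :: t) c (fun α hα => h α (List.mem_cons_of_mem _ hα))
      have t' : Taut ((c.imp β).imp ((c.imp (conj (γ :: t))).imp (c.imp (conj (β :: γ :: t))))) := by
        intro v hT hN hA
        simp only [Formula.imp, conj, hN, hA]
        tauto
      exact ((Derivable.taut t').mp h1).mp h2

lemma mcs_closed {Γ : Set Formula} (hΓ : MCS Γ) (l : List Formula) (hl : l ≠ [])
    (hmem : ∀ α ∈ l, α ∈ Γ) {ψ : Formula} (hd : Derivable ((conj l).imp ψ)) : ψ ∈ Γ := by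
  by_contra hψ
  have hss : Γ ⊂ insert ψ Γ := Set.ssubset_insert hψ
  have hinc := hΓ.2 (insert ψ Γ) hss
  rw [Consistent, not_not] at hinc
  obtain ⟨m, hm0, hmΓ, hmder⟩ := hinc
  classical
  set m' : List Formula := m.filter (fun α => α ≠ ψ) with hm'
  set L : List Formula := l ++ m' with hL
  have hLne : L ≠ [] := by
    simp [hL, hl]
  have hLΓ : ∀ α ∈ L, α ∈ Γ := by
    intro α hα
    rcases List.mem_append.mp hα with h | h
    · exact hmem α h
    · have := List.mem_filter.mp h
      have hne : α ≠ ψ := by simpa using this.2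
      rcases hmΓ α this.1 with h' | h'
      · exact absurd h' hne
      · exact h'
  -- conj L implies conj l
  have hLl : Derivable ((conj L).imp (conj l)) :=
    conj_intro l (conj L) (fun β hβ => conj_proj L β (List.mem_append_left _ hβ))
  have hLψ : Derivable ((conj L).imp ψ) := imp_trans' hLl hd
  have hLm : Derivable ((conj L).imp (conj m)) := by
    refine conj_intro m (conj L) (fun α hα => ?_)
    by_cases h : α = ψ
    · subst h; exact hLψ
    · exact conj_proj L α (List.mem_append_right _ (List.mem_filter.mpr ⟨hα, by simpa using h⟩))
  have hnegL : Derivable (Formula.neg (conj L)) := by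
    have t' : Taut (((conj L).imp (conj m)).imp ((Formula.neg (conj m)).imp (Formula.neg (conj L)))) := by
      intro v hT hN hA
      simp only [Formula.imp, hN, hA]
      tauto
    exact ((Derivable.taut t').mp hLm).mp hmder
  exact hΓ.1 ⟨L, hLne, hLΓ, hnegL⟩

lemma mono_nabla {φ ψ : Formula} (i d : ℕ) (h : Derivable (φ.imp ψ)) :
    Derivable ((Formula.nabla i ψ d).imp (Formula.nabla i φ d)) :=
  (Derivable.distNsv i φ ψ d).mp (Derivable.nec i h)

lemma dia_mono {φ ψ : Formula} (i : ℕ) (h : Derivable (φ.imp ψ)) :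
    Derivable ((Formula.dia i φ).imp (Formula.dia i ψ)) := by
  have hc : Derivable ((Formula.neg ψ).imp (Formula.neg φ)) := by
    have t' : Taut ((φ.imp ψ).imp ((Formula.neg ψ).imp (Formula.neg φ))) := by
      intro v hT hN hA
      simp only [Formula.imp, hN, hA]
      tauto
    exact (Derivable.taut t').mp h
  have hb : Derivable ((Formula.box i (Formula.neg ψ)).imp (Formula.box i (Formula.neg φ))) :=
    (Derivable.axK i _ _).mp (Derivable.nec i hc)
  have t' : Taut (((Formula.box i (Formula.neg ψ)).imp (Formula.box i (Formula.neg φ))).imp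
      ((Formula.dia i φ).imp (Formula.dia i ψ))) := by
    intro v hT hN hA
    simp only [Formula.imp, Formula.dia, hN, hA]
    tauto
  exact (Derivable.taut t').mp hb

end Aux
/-- for an MCS Γ, the relation φ ~ ψ iff ∇_i(φ∨ψ,d) ∈ Γ is an
equivalence relation on G(i,d) = {φ : ∇_i(φ,d)∧◇_iφ ∈ Γ}. -/
theorem sim_is_equivalence (Γ : Set Formula) (hΓ : MCS Γ) (i d : ℕ) :
    let G : Set Formula := {φ | (Formula.nabla i φ d).and (Formula.dia i φ) ∈ Γ}
    let r : Formula → Formula → Prop := fun φ ψ => Formula.nabla i (φ.or ψ) d ∈ Γ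
    (∀ φ ∈ G, r φ φ) ∧
    (∀ φ ∈ G, ∀ ψ ∈ G, r φ ψ → r ψ φ) ∧
    (∀ φ ∈ G, ∀ ψ ∈ G, ∀ χ ∈ G, r φ ψ → r ψ χ → r φ χ) := by
  intro G r
  refine ⟨?_, ?_, ?_⟩
  · -- reflexivity
    intro φ hφ
    have h : (Formula.nabla i φ d).and (Formula.dia i φ) ∈ Γ := hφ
    refine mcs_closed hΓ [(Formula.nabla i φ d).and (Formula.dia i φ)] (by simp)
      (by simpa using h) ?_
    have h1 : Derivable ((Formula.nabla i φ d).imp (Formula.nabla i (φ.or φ) d)) := by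
      refine mono_nabla i d (Derivable.taut ?_)
      intro v hT hN hA
      simp only [Formula.imp, Formula.or, hN, hA]
      tauto
    have h2 : Derivable ((((Formula.nabla i φ d).and (Formula.dia i φ))).imp (Formula.nabla i φ d)) := by
      refine Derivable.taut ?_
      intro v hT hN hA
      simp only [Formula.imp, hN, hA]
      tauto
    exact imp_trans' h2 h1
  · -- symmetry
    intro φ hφ ψ hψ h
    have h' : Formula.nabla i (φ.or ψ) d ∈ Γ := h
    refine mcs_closed hΓ [Formula.nabla i (φ.or ψ) d] (by simp) (by simpa using h') ?_
    refine mono_nabla i d (Derivable.taut ?_)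
    intro v hT hN hA
    simp only [Formula.imp, Formula.or, hN, hA]
    tauto
  · -- transitivity
    intro φ hφ ψ hψ χ hχ hφψ hψχ
    have hψ' : (Formula.nabla i ψ d).and (Formula.dia i ψ) ∈ Γ := hψ
    have ha : Formula.nabla i (φ.or ψ) d ∈ Γ := hφψ
    have hb : Formula.nabla i (ψ.or χ) d ∈ Γ := hψχ
    set α := φ.or ψ with hα
    set β := ψ.or χ with hβ
    have h1 : Derivable ((Formula.dia i ψ).imp (Formula.dia i (α.and β))) := by
      refine dia_mono i (Derivable.taut ?_)
      intro v hT hN hA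
      simp only [Formula.imp, Formula.or, hα, hβ, hN, hA]
      tauto
    have h2 := Derivable.nsvOr i α β d
    have h3 : Derivable ((Formula.nabla i (α.or β) d).imp (Formula.nabla i (φ.or χ) d)) := by
      refine mono_nabla i d (Derivable.taut ?_)
      intro v hT hN hA
      simp only [Formula.imp, Formula.or, hα, hβ, hN, hA]
      tauto
    refine mcs_closed hΓ
      [Formula.nabla i α d, Formula.nabla i β d, (Formula.nabla i ψ d).and (Formula.dia i ψ)]
      (by simp) ?_ ?_
    · intro γ hγ
      simp only [List.mem_cons, List.not_mem_nil, or_false] at hγ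
      rcases hγ with h | h | h <;> subst h
      · exact ha
      · exact hb
      · exact hψ'
    · have T : Taut (((Formula.dia i ψ).imp (Formula.dia i (α.and β))).imp
        (((((Formula.dia i (α.and β)).and (Formula.nabla i α d)).and (Formula.nabla i β d)).imp
          (Formula.nabla i (α.or β) d)).imp
        (((Formula.nabla i (α.or β) d).imp (Formula.nabla i (φ.or χ) d)).imp
        ((conj [Formula.nabla i α d, Formula.nabla i β d,
            (Formula.nabla i ψ d).and (Formula.dia i ψ)]).imp (Formula.nabla i (φ.or χ) d))))) := by
        intro v hT hN hA
        simp only [Formula.imp, Formula.or, conj, hN, hA]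
        tauto
      exact (((Derivable.taut T).mp h1).mp h2).mp h3
end

section
/- Proposition (successor construction): Let s = ⟨Γ_s, f_s, g_s⟩ be a world of the canonical model of SLKvr, i an agent, Γ a maximal consistent set such that {φ : □_iφ ∈ Γ_s} ⊆ Γ, and x a natural number. Then there exist functions f and g such that t = ⟨Γ, f, g⟩ is a world of the canonical model and s R_i t holds in the canonical model. -/
/-! ### Auxiliary development -/

namespace SuccAux
open Formula

/-! #### Countability of formulas -/

def toNat : Formula → ℕ
  | .top => Nat.pair 0 0
  | .atom p => Nat.pair 1 p
  | .neg φ => Nat.pair 2 (toNat φ)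
  | .and φ ψ => Nat.pair 3 (Nat.pair (toNat φ) (toNat ψ))
  | .box i φ => Nat.pair 4 (Nat.pair i (toNat φ))
  | .nabla i φ d => Nat.pair 5 (Nat.pair i (Nat.pair (toNat φ) d))

theorem toNat_inj : ∀ φ ψ : Formula, toNat φ = toNat ψ → φ = ψ := by
  intro φ
  induction φ with
  | top => intro ψ h; cases ψ <;> simp [toNat, Nat.pair_eq_pair] at h <;> rfl
  | atom p => intro ψ h; cases ψ <;> simp [toNat, Nat.pair_eq_pair] at h <;> simp [h]
  | neg α ih =>
      intro ψ h
      cases ψ <;> simp [toNat, Nat.pair_eq_pair] at h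
      simp [ih _ h]
  | and α β ih1 ih2 =>
      intro ψ h
      cases ψ <;> simp [toNat, Nat.pair_eq_pair] at h
      simp [ih1 _ h.1, ih2 _ h.2]
  | box i α ih =>
      intro ψ h
      cases ψ <;> simp [toNat, Nat.pair_eq_pair] at h
      simp [h.1, ih _ h.2]
  | nabla i α d ih =>
      intro ψ h
      cases ψ <;> simp [toNat, Nat.pair_eq_pair] at h
      simp [h.1, ih _ h.2.1, h.2.2]

instance : Countable Formula := ⟨toNat, fun _ _ h => toNat_inj _ _ h⟩

/-! #### System consistency via a one-point model -/

def TSat : Formula → Prop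
  | .top => True
  | .atom _ => False
  | .neg φ => ¬ TSat φ
  | .and φ ψ => TSat φ ∧ TSat ψ
  | .box _ _ => True
  | .nabla _ _ _ => True

theorem tsat_subst {ψ χ : Formula} (h : TSat ψ ↔ TSat χ) :
    ∀ φ, TSat φ ↔ TSat (Formula.subst ψ χ φ) := by
  intro φ
  induction φ with
  | top =>
      unfold Formula.subst; split
      · next heq => rw [← heq] at h; exact h
      · rfl
  | atom p =>
      unfold Formula.subst; split
      · next heq => rw [← heq] at h; exact h
      · rfl
  | neg α ih =>
      unfold Formula.subst; split
      · next heq => rw [← heq] at h; exact h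
      · show ¬ TSat α ↔ ¬ TSat _; rw [ih]
  | and α β ih1 ih2 =>
      unfold Formula.subst; split
      · next heq => rw [← heq] at h; exact h
      · show TSat α ∧ TSat β ↔ _ ∧ _; rw [ih1, ih2]
  | box i α ih =>
      unfold Formula.subst; split
      · next heq => rw [← heq] at h; exact h
      · show True ↔ True; rfl
  | nabla i α d ih =>
      unfold Formula.subst; split
      · next heq => rw [← heq] at h; exact h
      · show True ↔ True; rfl

theorem tsat_of_derivable {φ : Formula} (h : Derivable φ) : TSat φ := by
  induction h with
  | taut ht => exact ht TSat trivial (fun _ => Iff.rfl) (fun _ _ => Iff.rfl)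
  | axK i φ ψ => simp [Formula.imp, TSat]
  | distNsv i φ ψ d => simp [Formula.imp, TSat]
  | nsvBot i d => simp [TSat]
  | nsvOr i φ ψ d => simp [Formula.imp, TSat]
  | mp h1 h2 ih1 ih2 =>
      simp only [Formula.imp, TSat] at ih1
      tauto
  | nec i h ih => simp [TSat]
  | @re ψ' χ' φ h ih =>
      have hiff : TSat ψ' ↔ TSat χ' := by
        simp only [Formula.iff, Formula.imp, TSat] at ih
        tauto
      have := tsat_subst hiff φ
      simp only [Formula.iff, Formula.imp, TSat]
      tauto

theorem sysCon : ¬ Derivable (Formula.neg Formula.top) := by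
  intro h
  have := tsat_of_derivable h
  simp [TSat] at this

/-! #### Basic derivability facts -/

theorem dtaut {φ ψ : Formula} (h : Taut (φ.imp ψ)) (hφ : Derivable φ) :
    Derivable ψ :=
  Derivable.mp (Derivable.taut h) hφ

theorem conj_iff (v : Formula → Prop)
    (h0 : v Formula.top)
    (h2 : ∀ ψ χ, v (Formula.and ψ χ) ↔ (v ψ ∧ v χ)) :
    ∀ l : List Formula, v (conj l) ↔ ∀ φ ∈ l, v φ := by
  intro l
  induction l with
  | nil => simpa [conj] using h0
  | cons φ l ih =>
      cases l with
      | nil => simp [conj]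
      | cons ψ l' =>
          show v (Formula.and φ (conj (ψ :: l'))) ↔ _
          rw [h2, ih]
          simp

/-! #### MCS facts -/

theorem mcs_mem {Γ : Set Formula} (hΓ : MCS Γ) {φ : Formula}
    (h : DerivableFrom Γ φ) : φ ∈ Γ := by
  by_contra hφ
  obtain ⟨l, hl, hd⟩ := h
  have hsup := hΓ.2 (insert φ Γ) (Set.ssubset_insert hφ)
  rw [Consistent, not_not] at hsup
  obtain ⟨l', hl'ne, hl'mem, hl'd⟩ := hsup
  set m : List Formula := l ++ l'.filter (fun ψ => ψ ≠ φ) with hm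
  have hTaut : Taut (((conj l).imp φ).imp
      ((Formula.neg (conj l')).imp (Formula.neg (conj m)))) := by
    intro v h0 h1 h2
    have himp : ∀ A B : Formula, v (A.imp B) ↔ (v A → v B) := by
      intro A B
      show v (Formula.neg (A.and B.neg)) ↔ _
      rw [h1, h2, h1]; tauto
    have hc := conj_iff v h0 h2
    rw [himp, himp, himp, h1, h1, hc, hc, hc]
    intro hAB hnl' hmall
    apply hnl'
    intro ψ hψ
    by_cases hne : ψ = φ
    · subst hne
      exact hAB (fun χ hχ => hmall χ (by simp [hm, hχ]))
    · exact hmall ψ (by simp [hm, List.mem_filter, hψ, hne])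
  have hB : Derivable (Formula.neg (conj m)) :=
    Derivable.mp (Derivable.mp (Derivable.taut hTaut) hd) hl'd
  cases hmm : m with
  | nil =>
      rw [hmm] at hB
      exact sysCon hB
  | cons a as =>
      refine hΓ.1 ⟨m, by simp [hmm], ?_, hB⟩
      intro ψ hψ
      rw [hm] at hψ
      rcases List.mem_append.1 hψ with h1 | h1
      · exact hl ψ h1
      · rcases List.mem_filter.1 h1 with ⟨hmem, hne⟩
        rcases hl'mem ψ hmem with h2 | h2
        · simp at hne; exact absurd h2 hne
        · exact h2

/-! #### Tautology helpers -/

theorem vimp (v : Formula → Prop)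
    (h1 : ∀ ψ, v (Formula.neg ψ) ↔ ¬ v ψ)
    (h2 : ∀ ψ χ, v (Formula.and ψ χ) ↔ (v ψ ∧ v χ)) :
    ∀ A B : Formula, v (A.imp B) ↔ (v A → v B) := by
  intro A B
  show v (Formula.neg (A.and B.neg)) ↔ _
  rw [h1, h2, h1]; tauto

theorem vor (v : Formula → Prop)
    (h1 : ∀ ψ, v (Formula.neg ψ) ↔ ¬ v ψ)
    (h2 : ∀ ψ χ, v (Formula.and ψ χ) ↔ (v ψ ∧ v χ)) :
    ∀ A B : Formula, v (A.or B) ↔ (v A ∨ v B) := by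
  intro A B
  show v (Formula.neg ((Formula.neg A).and (Formula.neg B))) ↔ _
  rw [h1, h2, h1, h1]; tauto

/-! #### More MCS facts -/

theorem mcs_imp {Γ : Set Formula} (hΓ : MCS Γ) {φ ψ : Formula}
    (h : Derivable (φ.imp ψ)) (hφ : φ ∈ Γ) : ψ ∈ Γ :=
  mcs_mem hΓ ⟨[φ], by simpa using hφ, h⟩

theorem mcs_and_intro {Γ : Set Formula} (hΓ : MCS Γ) {φ ψ : Formula}
    (hφ : φ ∈ Γ) (hψ : ψ ∈ Γ) : φ.and ψ ∈ Γ := by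
  refine mcs_mem hΓ ⟨[φ, ψ], by simp [hφ, hψ], ?_⟩
  exact Derivable.taut (by
    intro v h0 h1 h2
    rw [vimp v h1 h2]
    exact id)

theorem mcs_and_left {Γ : Set Formula} (hΓ : MCS Γ) {φ ψ : Formula}
    (h : φ.and ψ ∈ Γ) : φ ∈ Γ :=
  mcs_imp hΓ (Derivable.taut (by
    intro v h0 h1 h2; rw [vimp v h1 h2, h2]; exact And.left)) h

theorem mcs_and_right {Γ : Set Formula} (hΓ : MCS Γ) {φ ψ : Formula}
    (h : φ.and ψ ∈ Γ) : ψ ∈ Γ :=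
  mcs_imp hΓ (Derivable.taut (by
    intro v h0 h1 h2; rw [vimp v h1 h2, h2]; exact And.right)) h

theorem mcs_not_both {Γ : Set Formula} (hΓ : MCS Γ) {φ : Formula}
    (h1 : φ ∈ Γ) (h2 : Formula.neg φ ∈ Γ) : False := by
  refine hΓ.1 ⟨[φ, Formula.neg φ], by simp, by simp [h1, h2], ?_⟩
  exact Derivable.taut (by
    intro v h0 hn ha
    show v (Formula.neg (φ.and φ.neg))
    rw [hn, ha, hn]; tauto)

theorem mcs_neg_complete {Γ : Set Formula} (hΓ : MCS Γ) (φ : Formula) :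
    φ ∈ Γ ∨ Formula.neg φ ∈ Γ := by
  by_contra hcon
  push_neg at hcon
  obtain ⟨hφ, hnφ⟩ := hcon
  have hs1 := hΓ.2 (insert φ Γ) (Set.ssubset_insert hφ)
  have hs2 := hΓ.2 (insert (Formula.neg φ) Γ) (Set.ssubset_insert hnφ)
  rw [Consistent, not_not] at hs1 hs2
  obtain ⟨l₁, hl₁ne, hl₁mem, hl₁d⟩ := hs1
  obtain ⟨l₂, hl₂ne, hl₂mem, hl₂d⟩ := hs2
  set m : List Formula :=
    l₁.filter (fun ψ => ψ ≠ φ) ++ l₂.filter (fun ψ => ψ ≠ Formula.neg φ) with hm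
  have hTaut : Taut ((Formula.neg (conj l₁)).imp
      ((Formula.neg (conj l₂)).imp (Formula.neg (conj m)))) := by
    intro v h0 h1 h2
    have hc := conj_iff v h0 h2
    rw [vimp v h1 h2, vimp v h1 h2, h1, h1, h1, hc, hc, hc]
    intro hn1 hn2 hmall
    have hvφ : ¬ v φ := by
      intro hv
      apply hn1
      intro ψ hψ
      by_cases hne : ψ = φ
      · exact hne ▸ hv
      · exact hmall ψ (by simp [hm, List.mem_filter, hψ, hne])
    apply hn2
    intro ψ hψ
    by_cases hne : ψ = Formula.neg φ
    · subst hne; rw [h1]; exact hvφ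
    · exact hmall ψ (by simp [hm, List.mem_filter, hψ, hne])
  have hB : Derivable (Formula.neg (conj m)) :=
    Derivable.mp (Derivable.mp (Derivable.taut hTaut) hl₁d) hl₂d
  cases hmm : m with
  | nil =>
      rw [hmm] at hB
      exact sysCon hB
  | cons a as =>
      refine hΓ.1 ⟨m, by simp [hmm], ?_, hB⟩
      intro ψ hψ
      rw [hm] at hψ
      rcases List.mem_append.1 hψ with h1 | h1
      · rcases List.mem_filter.1 h1 with ⟨hmem, hne⟩
        rcases hl₁mem ψ hmem with h2 | h2
        · simp at hne; exact absurd h2 hne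
        · exact h2
      · rcases List.mem_filter.1 h1 with ⟨hmem, hne⟩
        rcases hl₂mem ψ hmem with h2 | h2
        · simp at hne; exact absurd h2 hne
        · exact h2

/-! #### Derived rules for ∇ and ◇ -/

theorem d_nabla_mono {φ ψ : Formula} (i d : ℕ) (h : Derivable (φ.imp ψ)) :
    Derivable ((Formula.nabla i ψ d).imp (Formula.nabla i φ d)) :=
  Derivable.mp (Derivable.distNsv i φ ψ d) (Derivable.nec i h)

theorem d_dia_mono {φ ψ : Formula} (i : ℕ) (h : Derivable (φ.imp ψ)) :
    Derivable ((Formula.dia i φ).imp (Formula.dia i ψ)) := by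
  have h1 : Derivable ((Formula.neg ψ).imp (Formula.neg φ)) :=
    Derivable.mp (Derivable.taut (by
      intro v h0 hn ha
      simp only [vimp v hn ha, hn]
      tauto)) h
  have h3 : Derivable ((Formula.box i (Formula.neg ψ)).imp
      (Formula.box i (Formula.neg φ))) :=
    Derivable.mp (Derivable.axK i _ _) (Derivable.nec i h1)
  exact Derivable.mp (Derivable.taut (by
    intro v h0 hn ha
    simp only [Formula.dia, vimp v hn ha, hn]
    tauto)) h3

theorem mcs_nabla_mono {Γ : Set Formula} (hΓ : MCS Γ) {φ ψ : Formula} {i d : ℕ}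
    (h : Derivable (φ.imp ψ)) (hψ : Formula.nabla i ψ d ∈ Γ) :
    Formula.nabla i φ d ∈ Γ :=
  mcs_imp hΓ (d_nabla_mono i d h) hψ

theorem nsv_refl {Γ : Set Formula} (hΓ : MCS Γ) {φ : Formula} {i d : ℕ}
    (h : Formula.nabla i φ d ∈ Γ) : Formula.nabla i (φ.or φ) d ∈ Γ :=
  mcs_nabla_mono hΓ (Derivable.taut (by
    intro v h0 hn ha
    rw [vimp v hn ha, vor v hn ha]
    tauto)) h

theorem nsv_symm {Γ : Set Formula} (hΓ : MCS Γ) {φ ψ : Formula} {i d : ℕ}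
    (h : Formula.nabla i (φ.or ψ) d ∈ Γ) : Formula.nabla i (ψ.or φ) d ∈ Γ :=
  mcs_nabla_mono hΓ (Derivable.taut (by
    intro v h0 hn ha
    rw [vimp v hn ha, vor v hn ha, vor v hn ha]
    tauto)) h

theorem nsv_trans {Γ : Set Formula} (hΓ : MCS Γ) {φ ψ χ : Formula} {i d : ℕ}
    (hφψ : Formula.nabla i (φ.or ψ) d ∈ Γ)
    (hψχ : Formula.nabla i (ψ.or χ) d ∈ Γ)
    (hdia : Formula.dia i ψ ∈ Γ) : Formula.nabla i (φ.or χ) d ∈ Γ := by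
  set A := φ.or ψ with hA
  set B := ψ.or χ with hB
  have h1 : Formula.dia i (A.and B) ∈ Γ := by
    refine mcs_imp hΓ (d_dia_mono i (Derivable.taut ?_)) hdia
    intro v h0 hn ha
    rw [vimp v hn ha, ha, hA, hB, vor v hn ha, vor v hn ha]
    tauto
  have h2 : ((Formula.dia i (A.and B)).and (Formula.nabla i A d)).and
      (Formula.nabla i B d) ∈ Γ :=
    mcs_and_intro hΓ (mcs_and_intro hΓ h1 hφψ) hψχ
  have h3 : Formula.nabla i (A.or B) d ∈ Γ :=
    mcs_imp hΓ (Derivable.nsvOr i A B d) h2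
  refine mcs_nabla_mono hΓ (Derivable.taut ?_) h3
  intro v h0 hn ha
  rw [vimp v hn ha, vor v hn ha, vor v hn ha, hA, hB, vor v hn ha, vor v hn ha]
  tauto

theorem mcs_dia_of_mem {Γs Γ : Set Formula} (hΓs : MCS Γs) (hΓ : MCS Γ)
    {i : ℕ} (hsub : ∀ φ, Formula.box i φ ∈ Γs → φ ∈ Γ) {χ : Formula}
    (hχ : χ ∈ Γ) : Formula.dia i χ ∈ Γs := by
  rcases mcs_neg_complete hΓs (Formula.dia i χ) with h | h
  · exact h
  · exfalso
    have hb : Formula.box i (Formula.neg χ) ∈ Γs := by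
      refine mcs_imp hΓs (Derivable.taut ?_) h
      intro v h0 hn ha
      rw [vimp v hn ha]
      show v (Formula.neg (Formula.neg _)) → _
      rw [hn, hn]
      tauto
    exact mcs_not_both hΓ hχ (hsub _ hb)

/-! #### Construction of the value witness function g for an MCS -/

def NDom (Γ : Set Formula) (j d : ℕ) : Type :=
  {φ : Formula // (Formula.nabla j φ d).and (Formula.dia j φ) ∈ Γ}

instance (Γ : Set Formula) (j d : ℕ) : Countable (NDom Γ j d) :=
  Subtype.countable

def nsvSetoid {Γ : Set Formula} (hΓ : MCS Γ) (j d : ℕ) : Setoid (NDom Γ j d) where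
  r a b := Formula.nabla j (a.1.or b.1) d ∈ Γ
  iseqv := by
    constructor
    · intro a
      exact nsv_refl hΓ (mcs_and_left hΓ a.2)
    · intro a b h
      exact nsv_symm hΓ h
    · intro a b c h1 h2
      exact nsv_trans hΓ h1 h2 (mcs_and_right hΓ b.2)

theorem exists_g {Γ : Set Formula} (hΓ : MCS Γ) :
    ∃ g : ℕ → Formula → ℕ → Option ℕ,
      (∀ i φ d, g i φ d ≠ none ↔ (Formula.nabla i φ d).and (Formula.dia i φ) ∈ Γ) ∧
      (∀ i φ ψ d, g i φ d ≠ none → g i ψ d ≠ none →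
        (g i φ d = g i ψ d ↔ Formula.nabla i (φ.or ψ) d ∈ Γ)) := by
  have hinj : ∀ j d : ℕ, ∃ F : Quotient (nsvSetoid hΓ j d) → ℕ, Function.Injective F :=
    fun j d => Countable.exists_injective_nat _
  choose F hF using hinj
  classical
  set g : ℕ → Formula → ℕ → Option ℕ := fun j φ d =>
    if h : (Formula.nabla j φ d).and (Formula.dia j φ) ∈ Γ then
      some (F j d (Quotient.mk (nsvSetoid hΓ j d) ⟨φ, h⟩)) else none with hg
  refine ⟨g, ?_, ?_⟩
  · intro j φ d
    by_cases h : (Formula.nabla j φ d).and (Formula.dia j φ) ∈ Γ <;>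
      simp [hg, h]
  · intro j φ ψ d hφ hψ
    by_cases h1 : (Formula.nabla j φ d).and (Formula.dia j φ) ∈ Γ
    swap
    · simp [hg, h1] at hφ
    by_cases h2 : (Formula.nabla j ψ d).and (Formula.dia j ψ) ∈ Γ
    swap
    · simp [hg, h2] at hψ
    simp only [hg]
    rw [dif_pos h1, dif_pos h2]
    constructor
    · intro heq
      have := hF j d (Option.some_injective _ heq)
      exact Quotient.exact this
    · intro hmem
      exact congrArg (fun q => some (F j d q)) (Quotient.sound hmem)

end SuccAux


/-- successor construction: given a canonical world s, an agent
i, an MCS Γ with {φ : □_iφ ∈ Γ_s} ⊆ Γ, and a natural number x, there are f and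
g making t = ⟨Γ,f,g⟩ a canonical world with s R_i t. -/
theorem successor_construction (s : CWorld) (i : ℕ) (Γ : Set Formula)
    (hΓ : MCS Γ) (hsub : {φ | Formula.box i φ ∈ s.Γ} ⊆ Γ) (x : ℕ) :
    ∃ t : CWorld, t.Γ = Γ ∧ CRel i s t := by
  classical
  obtain ⟨g, hg1, hg2⟩ := SuccAux.exists_g hΓ
  have hsub' : ∀ φ, Formula.box i φ ∈ s.Γ → φ ∈ Γ := fun φ h => hsub h
  have key : ∀ (φ ψ : Formula) (d : ℕ), Formula.nabla i φ d ∈ s.Γ → φ ∈ Γ →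
      Formula.nabla i ψ d ∈ s.Γ → ψ ∈ Γ → s.g i φ d = s.g i ψ d := by
    intro φ ψ d hnφ hφ hnψ hψ
    have hdφ : Formula.dia i φ ∈ s.Γ := SuccAux.mcs_dia_of_mem s.mcs hΓ hsub' hφ
    have hdψ : Formula.dia i ψ ∈ s.Γ := SuccAux.mcs_dia_of_mem s.mcs hΓ hsub' hψ
    have hneφ : s.g i φ d ≠ none :=
      (s.cond1 i φ d).2 (SuccAux.mcs_and_intro s.mcs hnφ hdφ)
    have hneψ : s.g i ψ d ≠ none :=
      (s.cond1 i ψ d).2 (SuccAux.mcs_and_intro s.mcs hnψ hdψ)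
    have hdand : Formula.dia i (φ.and ψ) ∈ s.Γ :=
      SuccAux.mcs_dia_of_mem s.mcs hΓ hsub' (SuccAux.mcs_and_intro hΓ hφ hψ)
    have hor : Formula.nabla i (φ.or ψ) d ∈ s.Γ :=
      SuccAux.mcs_imp s.mcs (Derivable.nsvOr i φ ψ d)
        (SuccAux.mcs_and_intro s.mcs (SuccAux.mcs_and_intro s.mcs hdand hnφ) hnψ)
    exact (s.cond2 i φ ψ d hneφ hneψ).2 hor
  set f : ℕ → ℕ := fun d =>
    if h : ∃ ψ, Formula.nabla i ψ d ∈ s.Γ ∧ ψ ∈ Γ then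
      (s.g i h.choose d).getD x else x with hf
  refine ⟨⟨Γ, f, g, hΓ, hg1, hg2⟩, rfl, fun φ h => hsub h, ?_⟩
  intro φ d hnφ hφ
  show s.g i φ d = some (f d)
  have hex : ∃ ψ, Formula.nabla i ψ d ∈ s.Γ ∧ ψ ∈ Γ := ⟨φ, hnφ, hφ⟩
  have hspec := hex.choose_spec
  have heq : s.g i φ d = s.g i hex.choose d :=
    key φ hex.choose d hnφ hφ hspec.1 hspec.2
  have hne : s.g i hex.choose d ≠ none :=
    (s.cond1 i hex.choose d).2 (SuccAux.mcs_and_intro s.mcs hspec.1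
      (SuccAux.mcs_dia_of_mem s.mcs hΓ hsub' hspec.2))
  obtain ⟨n, hn⟩ := Option.ne_none_iff_exists'.1 hne
  rw [heq, hn]
  simp only [hf]
  rw [dif_pos hex, hn]
  rfl
end

section
/- Existence lemma for ¬∇: For every world s of the canonical model of SLKvr, every agent i, every formula ψ, and every constant symbol d, if ¬∇_i(ψ,d) ∈ Γ_s then there exist worlds t₁ and t₂ of the canonical model such that ψ ∈ Γ_{t₁}, ψ ∈ Γ_{t₂}, s R_i t₁, s R_i t₂, and f_{t₁}(d) ≠ f_{t₂}(d). -/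
/-! ### New material -/

/-- Disjunction of a list (⊥ for empty). -/
def disj : List Formula → Formula
  | [] => Formula.bot
  | [φ] => φ
  | φ :: ψ :: l => φ.or (disj (ψ :: l))

section Val
variable {v : Formula → Prop}

lemma v_imp (hN : ∀ ψ, v (Formula.neg ψ) ↔ ¬ v ψ)
    (hA : ∀ ψ χ, v (Formula.and ψ χ) ↔ (v ψ ∧ v χ)) (a b : Formula) :
    v (a.imp b) ↔ (v a → v b) := by
  simp only [Formula.imp, hN, hA]; tauto

lemma v_or (hN : ∀ ψ, v (Formula.neg ψ) ↔ ¬ v ψ)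
    (hA : ∀ ψ χ, v (Formula.and ψ χ) ↔ (v ψ ∧ v χ)) (a b : Formula) :
    v (a.or b) ↔ (v a ∨ v b) := by
  simp only [Formula.or, hN, hA]; tauto

lemma v_bot (hT : v Formula.top) (hN : ∀ ψ, v (Formula.neg ψ) ↔ ¬ v ψ) :
    v Formula.bot ↔ False := by
  simp only [Formula.bot, hN]; tauto

lemma v_conj (hT : v Formula.top)
    (hA : ∀ ψ χ, v (Formula.and ψ χ) ↔ (v ψ ∧ v χ)) :
    ∀ l : List Formula, (v (conj l) ↔ ∀ φ ∈ l, v φ)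
  | [] => by simpa [conj] using hT
  | [φ] => by simp [conj]
  | φ :: ψ :: l => by
      rw [conj, hA, v_conj hT hA (ψ :: l)]
      constructor
      · rintro ⟨h1, h2⟩ χ hχ
        rcases List.mem_cons.mp hχ with rfl | hχ
        · exact h1
        · exact h2 χ hχ
      · intro h
        exact ⟨h φ (by simp), fun χ hχ => h χ (List.mem_cons_of_mem _ hχ)⟩

lemma v_disj (hT : v Formula.top) (hN : ∀ ψ, v (Formula.neg ψ) ↔ ¬ v ψ)
    (hA : ∀ ψ χ, v (Formula.and ψ χ) ↔ (v ψ ∧ v χ)) :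
    ∀ l : List Formula, (v (disj l) ↔ ∃ φ ∈ l, v φ)
  | [] => by simp [disj, v_bot hT hN]
  | [φ] => by simp [disj]
  | φ :: ψ :: l => by
      rw [disj, v_or hN hA, v_disj hT hN hA (ψ :: l)]
      simp

end Val

namespace Derivable

lemma taut1 {a b : Formula} (ht : Taut (a.imp b)) (h : Derivable a) : Derivable b :=
  (Derivable.taut ht).mp h

lemma taut2 {a b c : Formula} (ht : Taut (a.imp (b.imp c)))
    (h1 : Derivable a) (h2 : Derivable b) : Derivable c :=
  ((Derivable.taut ht).mp h1).mp h2

lemma taut3 {a b c e : Formula} (ht : Taut (a.imp (b.imp (c.imp e))))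
    (h1 : Derivable a) (h2 : Derivable b) (h3 : Derivable c) : Derivable e :=
  (((Derivable.taut ht).mp h1).mp h2).mp h3

lemma imp_of (a : Formula) {b : Formula} (h : Derivable b) : Derivable (a.imp b) := by
  refine taut1 ?_ h
  intro v hT hN hA
  simp only [v_imp hN hA]; tauto

lemma box_mono {a b : Formula} (i : ℕ) (h : Derivable (a.imp b)) :
    Derivable ((Formula.box i a).imp (Formula.box i b)) :=
  (Derivable.axK i a b).mp (Derivable.nec i h)

lemma imp_trans {a b c : Formula} (h1 : Derivable (a.imp b)) (h2 : Derivable (b.imp c)) :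
    Derivable (a.imp c) := by
  refine taut2 ?_ h1 h2
  intro v hT hN hA
  simp only [v_imp hN hA]; tauto

lemma box_imp2 {a b c : Formula} (i : ℕ) (h : Derivable (a.imp (b.imp c))) :
    Derivable ((Formula.box i a).imp ((Formula.box i b).imp (Formula.box i c))) :=
  imp_trans (box_mono i h) (Derivable.axK i b c)

lemma dia_mono {a b : Formula} (i : ℕ) (h : Derivable (a.imp b)) :
    Derivable ((Formula.dia i a).imp (Formula.dia i b)) := by
  have hc : Derivable ((b.neg).imp (a.neg)) := by
    refine taut1 ?_ h
    intro v hT hN hA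
    simp only [v_imp hN hA, hN]; tauto
  have := box_mono i hc
  refine taut1 ?_ this
  intro v hT hN hA
  simp only [Formula.dia, v_imp hN hA, hN]; tauto

lemma nsv_mono {a b : Formula} (i d : ℕ) (h : Derivable (a.imp b)) :
    Derivable ((Formula.nabla i b d).imp (Formula.nabla i a d)) :=
  (Derivable.distNsv i a b d).mp (Derivable.nec i h)

/-- conj of boxes implies box of conj. -/
lemma conj_box (i : ℕ) : ∀ l : List Formula,
    Derivable ((conj (l.map (Formula.box i))).imp (Formula.box i (conj l)))
  | [] => by
      simpa [conj] using imp_of _ (Derivable.nec i (Derivable.taut (fun v hT _ _ => hT)))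
  | [φ] => by
      refine Derivable.taut ?_
      intro v hT hN hA
      simp only [List.map, conj, v_imp hN hA]; tauto
  | φ :: ψ :: l => by
      have ih := conj_box i (ψ :: l)
      have h2 : Derivable ((Formula.box i φ).imp
          ((Formula.box i (conj (ψ :: l))).imp (Formula.box i (conj (φ :: ψ :: l))))) := by
        refine box_imp2 i ?_
        refine Derivable.taut ?_
        intro v hT hN hA
        simp only [conj, v_imp hN hA, hA]; tauto
      refine taut2 ?_ ih h2
      intro v hT hN hA
      simp only [List.map, conj, v_imp hN hA, hA]
      tauto

end Derivable
/-! ### MCS lemmas -/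

lemma Consistent.mono {Γ Δ : Set Formula} (h : Consistent Δ) (hsub : Γ ⊆ Δ) : Consistent Γ := by
  rintro ⟨l, hne, hmem, hd⟩
  exact h ⟨l, hne, fun φ hφ => hsub (hmem φ hφ), hd⟩

lemma mcs_mem {Γ : Set Formula} (hΓ : MCS Γ) (hne : Γ.Nonempty) {φ : Formula}
    (hd : DerivableFrom Γ φ) : φ ∈ Γ := by
  by_contra hφ
  obtain ⟨m, hm, hdm⟩ := hd
  obtain ⟨γ₀, hγ₀⟩ := hne
  have hssub : Γ ⊂ insert φ Γ := Set.ssubset_insert hφ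
  obtain ⟨l, hlne, hlsub, hld⟩ := not_not.mp fun hc => hΓ.2 _ hssub hc
  refine hΓ.1 ⟨γ₀ :: (l.filter (fun χ => χ ≠ φ)) ++ m, by simp, ?_, ?_⟩
  · intro χ hχ
    rcases List.mem_cons.mp hχ with rfl | hχ
    · exact hγ₀
    rcases List.mem_append.mp hχ with hχ | hχ
    · obtain ⟨hχl, hχφ⟩ := List.mem_filter.mp hχ
      rcases hlsub χ hχl with rfl | h
      · simp at hχφ
      · exact h
    · exact hm χ hχ
  · refine Derivable.taut2 ?_ hld hdm
    intro v hT hN hA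
    simp only [v_imp hN hA, hN, v_conj hT hA]
    intro hnl hmφ hLv
    apply hnl
    intro χ hχ
    by_cases hcf : χ = φ
    · subst hcf
      apply hmφ
      intro χ' hχ'
      exact hLv χ' (List.mem_cons_of_mem _ (List.mem_append.mpr (Or.inr hχ')))
    · exact hLv χ (List.mem_cons_of_mem _ (List.mem_append.mpr
        (Or.inl (List.mem_filter.mpr ⟨hχ, by simp [hcf]⟩))))

lemma mcs_mp1 {Γ : Set Formula} (hΓ : MCS Γ) (hne : Γ.Nonempty) {a b : Formula}
    (h1 : a ∈ Γ) (hd : Derivable (a.imp b)) : b ∈ Γ :=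
  mcs_mem hΓ hne ⟨[a], by simpa using h1, by simpa [conj] using hd⟩

lemma mcs_mp2 {Γ : Set Formula} (hΓ : MCS Γ) (hne : Γ.Nonempty) {a b c : Formula}
    (h1 : a ∈ Γ) (h2 : b ∈ Γ) (hd : Derivable (a.imp (b.imp c))) : c ∈ Γ := by
  refine mcs_mem hΓ hne ⟨[a, b], ?_, ?_⟩
  · intro χ hχ
    rcases List.mem_cons.mp hχ with rfl | hχ
    · exact h1
    · simpa using (by simpa using hχ) ▸ h2
  · have : conj [a, b] = a.and b := rfl
    rw [this]
    refine Derivable.taut1 ?_ hd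
    intro v hT hN hA
    simp only [v_imp hN hA, hA]; tauto

lemma mcs_mp3 {Γ : Set Formula} (hΓ : MCS Γ) (hne : Γ.Nonempty) {a b c e : Formula}
    (h1 : a ∈ Γ) (h2 : b ∈ Γ) (h3 : c ∈ Γ) (hd : Derivable (a.imp (b.imp (c.imp e)))) :
    e ∈ Γ := by
  refine mcs_mem hΓ hne ⟨[a, b, c], ?_, ?_⟩
  · intro χ hχ
    simp only [List.mem_cons, List.not_mem_nil, or_false] at hχ
    rcases hχ with rfl | rfl | rfl
    exacts [h1, h2, h3]
  · have : conj [a, b, c] = a.and (b.and c) := rfl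
    rw [this]
    refine Derivable.taut1 ?_ hd
    intro v hT hN hA
    simp only [v_imp hN hA, hA]; tauto

lemma mcs_not_both {Γ : Set Formula} (hΓ : MCS Γ) {φ : Formula}
    (h1 : φ ∈ Γ) (h2 : φ.neg ∈ Γ) : False := by
  refine hΓ.1 ⟨[φ, φ.neg], by simp, ?_, ?_⟩
  · intro χ hχ
    rcases List.mem_cons.mp hχ with rfl | hχ
    · exact h1
    · simpa using (by simpa using hχ) ▸ h2
  · have : conj [φ, φ.neg] = φ.and φ.neg := rfl
    rw [this]
    refine Derivable.taut ?_
    intro v hT hN hA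
    simp only [hN, hA]; tauto

lemma mcs_neg_mem {Γ : Set Formula} (hΓ : MCS Γ) (hne : Γ.Nonempty) {φ : Formula}
    (h : φ ∉ Γ) : φ.neg ∈ Γ := by
  obtain ⟨γ₀, hγ₀⟩ := hne
  have hssub : Γ ⊂ insert φ Γ := Set.ssubset_insert h
  obtain ⟨l, hlne, hlsub, hld⟩ := not_not.mp fun hc => hΓ.2 _ hssub hc
  refine mcs_mem hΓ ⟨γ₀, hγ₀⟩ ⟨γ₀ :: l.filter (fun χ => χ ≠ φ), ?_, ?_⟩
  · intro χ hχ
    rcases List.mem_cons.mp hχ with rfl | hχ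
    · exact hγ₀
    obtain ⟨hχl, hχφ⟩ := List.mem_filter.mp hχ
    rcases hlsub χ hχl with rfl | hh
    · simp at hχφ
    · exact hh
  · refine Derivable.taut1 ?_ hld
    intro v hT hN hA
    simp only [v_imp hN hA, hN, v_conj hT hA]
    intro hnl hLv hvφ
    apply hnl
    intro χ hχ
    by_cases hcf : χ = φ
    · exact hcf ▸ hvφ
    · apply hLv
      simp only [List.mem_cons, List.mem_filter]
      right
      exact ⟨hχ, by simp [hcf]⟩

lemma mcs_and_iff {Γ : Set Formula} (hΓ : MCS Γ) (hne : Γ.Nonempty) {a b : Formula} :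
    a.and b ∈ Γ ↔ (a ∈ Γ ∧ b ∈ Γ) := by
  constructor
  · intro h
    constructor
    · refine mcs_mp1 hΓ hne h (Derivable.taut ?_)
      intro v hT hN hA; simp only [v_imp hN hA, hA]; tauto
    · refine mcs_mp1 hΓ hne h (Derivable.taut ?_)
      intro v hT hN hA; simp only [v_imp hN hA, hA]; tauto
  · rintro ⟨h1, h2⟩
    refine mcs_mp2 hΓ hne h1 h2 (Derivable.taut ?_)
    intro v hT hN hA; simp only [v_imp hN hA, hA]; tauto

lemma mcs_mem_of_neg_not_mem {Γ : Set Formula} (hΓ : MCS Γ) (hne : Γ.Nonempty) {φ : Formula}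
    (h : φ.neg ∉ Γ) : φ ∈ Γ := by
  have := mcs_neg_mem hΓ hne h
  refine mcs_mp1 hΓ hne this (Derivable.taut ?_)
  intro v hT hN hA; simp only [v_imp hN hA, hN]; tauto

/-! ### Lindenbaum -/

lemma lindenbaum {Γ : Set Formula} (h : Consistent Γ) : ∃ Δ, Γ ⊆ Δ ∧ MCS Δ := by
  have key : ∀ c ⊆ {Δ : Set Formula | Consistent Δ}, IsChain (· ⊆ ·) c → c.Nonempty →
      ∃ ub ∈ {Δ : Set Formula | Consistent Δ}, ∀ s ∈ c, s ⊆ ub := by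
    intro c hcsub hchain hcne
    refine ⟨⋃₀ c, ?_, fun s hs => Set.subset_sUnion_of_mem hs⟩
    rintro ⟨l, hlne, hlsub, hld⟩
    have : ∃ t ∈ c, ∀ φ ∈ l, φ ∈ t := by
      clear hld hlne
      induction l with
      | nil => exact ⟨hcne.choose, hcne.choose_spec, by simp⟩
      | cons φ l ih =>
        obtain ⟨t, htc, htl⟩ := ih (fun χ hχ => hlsub χ (List.mem_cons_of_mem _ hχ))
        obtain ⟨u, huc, hφu⟩ := hlsub φ (by simp)
        rcases hchain.total htc huc with hsub | hsub
        · exact ⟨u, huc, fun χ hχ => by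
            rcases List.mem_cons.mp hχ with rfl | hχ
            exacts [hφu, hsub (htl χ hχ)]⟩
        · exact ⟨t, htc, fun χ hχ => by
            rcases List.mem_cons.mp hχ with rfl | hχ
            exacts [hsub hφu, htl χ hχ]⟩
    obtain ⟨t, htc, htl⟩ := this
    exact hcsub htc ⟨l, hlne, htl, hld⟩
  obtain ⟨Δ, hΓΔ, hmax⟩ := zorn_subset_nonempty {Δ : Set Formula | Consistent Δ} key Γ h
  refine ⟨Δ, hΓΔ, hmax.prop, ?_⟩
  intro Δ' hsub hc
  have : Δ' = Δ := hmax.eq_of_ge hc hsub.subset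
  exact hsub.ne this.symm
/-! ### Encoding of formulas -/

def enc : Formula → ℕ
  | .top => 0
  | .atom p => 6*p+1
  | .neg φ => 6*(enc φ)+2
  | .and φ ψ => 6*(Nat.pair (enc φ) (enc ψ))+3
  | .box i φ => 6*(Nat.pair i (enc φ))+4
  | .nabla i φ d => 6*(Nat.pair i (Nat.pair (enc φ) d))+5

theorem enc_inj : ∀ (φ ψ : Formula), enc φ = enc ψ → φ = ψ := by
  intro φ
  induction φ with
  | top => intro ψ h; cases ψ <;> simp only [enc] at h <;> first | rfl | omega
  | atom p =>
      intro ψ h; cases ψ <;> simp only [enc] at h <;> try omega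
      case atom q => have : p = q := by omega
                     rw [this]
  | neg φ ih =>
      intro ψ h; cases ψ <;> simp only [enc] at h <;> try omega
      case neg χ => have : enc φ = enc χ := by omega
                    rw [ih χ this]
  | and φ₁ φ₂ ih1 ih2 =>
      intro ψ h; cases ψ <;> simp only [enc] at h <;> try omega
      case and χ₁ χ₂ =>
        have hp : Nat.pair (enc φ₁) (enc φ₂) = Nat.pair (enc χ₁) (enc χ₂) := by omega
        obtain ⟨h1, h2⟩ := Nat.pair_eq_pair.mp hp
        rw [ih1 χ₁ h1, ih2 χ₂ h2]
  | box i φ ih =>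
      intro ψ h; cases ψ <;> simp only [enc] at h <;> try omega
      case box j χ =>
        have hp : Nat.pair i (enc φ) = Nat.pair j (enc χ) := by omega
        obtain ⟨h1, h2⟩ := Nat.pair_eq_pair.mp hp
        rw [h1, ih χ h2]
  | nabla i φ d ih =>
      intro ψ h; cases ψ <;> simp only [enc] at h <;> try omega
      case nabla j χ e =>
        have hp : Nat.pair i (Nat.pair (enc φ) d) = Nat.pair j (Nat.pair (enc χ) e) := by omega
        obtain ⟨h1, h2⟩ := Nat.pair_eq_pair.mp hp
        obtain ⟨h3, h4⟩ := Nat.pair_eq_pair.mp h2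
        rw [h1, h4, ih χ h3]

/-! ### Equivalence facts for ∇ inside an MCS -/

section Equiv
variable {Δ : Set Formula} (hΔ : MCS Δ) (hne : Δ.Nonempty)
include hΔ hne

lemma nsv_refl {i d : ℕ} {φ : Formula} (h : Formula.nabla i φ d ∈ Δ) :
    Formula.nabla i (φ.or φ) d ∈ Δ := by
  refine mcs_mp1 hΔ hne h (Derivable.nsv_mono i d (Derivable.taut ?_))
  intro v hT hN hA; simp only [v_imp hN hA, v_or hN hA]; tauto

lemma nsv_symm {i d : ℕ} {φ χ : Formula} (h : Formula.nabla i (φ.or χ) d ∈ Δ) :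
    Formula.nabla i (χ.or φ) d ∈ Δ := by
  refine mcs_mp1 hΔ hne h (Derivable.nsv_mono i d (Derivable.taut ?_))
  intro v hT hN hA; simp only [v_imp hN hA, v_or hN hA]; tauto

omit hΔ hne in
/-- curry a nested-conjunction implication -/
lemma curry3 {a b c e : Formula} (h : Derivable (((a.and b).and c).imp e)) :
    Derivable (a.imp (b.imp (c.imp e))) := by
  refine Derivable.taut1 ?_ h
  intro v hT hN hA; simp only [v_imp hN hA, hA]; tauto

lemma nsv_trans {i d : ℕ} {φ χ ρ : Formula} (hdia : Formula.dia i χ ∈ Δ)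
    (h1 : Formula.nabla i (φ.or χ) d ∈ Δ) (h2 : Formula.nabla i (χ.or ρ) d ∈ Δ) :
    Formula.nabla i (φ.or ρ) d ∈ Δ := by
  have hd : Formula.dia i ((φ.or χ).and (χ.or ρ)) ∈ Δ := by
    refine mcs_mp1 hΔ hne hdia (Derivable.dia_mono i (Derivable.taut ?_))
    intro v hT hN hA; simp only [v_imp hN hA, v_or hN hA, hA]; tauto
  have hbig : Formula.nabla i ((φ.or χ).or (χ.or ρ)) d ∈ Δ :=
    mcs_mp3 hΔ hne hd h1 h2 (curry3 (Derivable.nsvOr i (φ.or χ) (χ.or ρ) d))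
  refine mcs_mp1 hΔ hne hbig (Derivable.nsv_mono i d (Derivable.taut ?_))
  intro v hT hN hA; simp only [v_imp hN hA, v_or hN hA]; tauto

end Equiv

/-! ### The canonical value function g for an MCS -/

open Classical in
noncomputable def gMk (Δ : Set Formula) : ℕ → Formula → ℕ → Option ℕ := fun i φ d =>
  if (Formula.nabla i φ d).and (Formula.dia i φ) ∈ Δ then
    some (sInf {n | ∃ χ, (Formula.nabla i χ d).and (Formula.dia i χ) ∈ Δ ∧
      Formula.nabla i (φ.or χ) d ∈ Δ ∧ enc χ = n})
  else none

lemma gMk_cond1 (Δ : Set Formula) (i : ℕ) (φ : Formula) (d : ℕ) :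
    gMk Δ i φ d ≠ none ↔ (Formula.nabla i φ d).and (Formula.dia i φ) ∈ Δ := by
  unfold gMk
  split <;> simp_all

section GTwo
variable {Δ : Set Formula} (hΔ : MCS Δ) (hne : Δ.Nonempty)
include hΔ hne

lemma gMk_set_mem {i d : ℕ} {φ : Formula}
    (hc : (Formula.nabla i φ d).and (Formula.dia i φ) ∈ Δ) :
    sInf {n | ∃ χ, (Formula.nabla i χ d).and (Formula.dia i χ) ∈ Δ ∧
      Formula.nabla i (φ.or χ) d ∈ Δ ∧ enc χ = n} ∈
    {n | ∃ χ, (Formula.nabla i χ d).and (Formula.dia i χ) ∈ Δ ∧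
      Formula.nabla i (φ.or χ) d ∈ Δ ∧ enc χ = n} := by
  apply Nat.sInf_mem
  exact ⟨enc φ, φ, hc, nsv_refl hΔ hne ((mcs_and_iff hΔ hne).mp hc).1, rfl⟩

lemma gMk_cond2 {i d : ℕ} {φ ψ : Formula}
    (h1 : gMk Δ i φ d ≠ none) (h2 : gMk Δ i ψ d ≠ none) :
    (gMk Δ i φ d = gMk Δ i ψ d ↔ Formula.nabla i (φ.or ψ) d ∈ Δ) := by
  have hcφ := (gMk_cond1 Δ i φ d).mp h1
  have hcψ := (gMk_cond1 Δ i ψ d).mp h2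
  have hdφ : Formula.dia i φ ∈ Δ := ((mcs_and_iff hΔ hne).mp hcφ).2
  have hdψ : Formula.dia i ψ ∈ Δ := ((mcs_and_iff hΔ hne).mp hcψ).2
  have egφ : gMk Δ i φ d = some (sInf {n | ∃ χ,
      (Formula.nabla i χ d).and (Formula.dia i χ) ∈ Δ ∧
      Formula.nabla i (φ.or χ) d ∈ Δ ∧ enc χ = n}) := by
    unfold gMk; rw [if_pos hcφ]
  have egψ : gMk Δ i ψ d = some (sInf {n | ∃ χ,
      (Formula.nabla i χ d).and (Formula.dia i χ) ∈ Δ ∧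
      Formula.nabla i (ψ.or χ) d ∈ Δ ∧ enc χ = n}) := by
    unfold gMk; rw [if_pos hcψ]
  rw [egφ, egψ]
  constructor
  · intro heq
    have heq' := Option.some_injective _ heq
    obtain ⟨χ₁, hcχ₁, hn₁, he₁⟩ := gMk_set_mem hΔ hne hcφ
    obtain ⟨χ₂, hcχ₂, hn₂, he₂⟩ := gMk_set_mem hΔ hne hcψ
    have : χ₁ = χ₂ := enc_inj _ _ (by rw [he₁, he₂, heq'])
    subst this
    have hdχ : Formula.dia i χ₁ ∈ Δ := ((mcs_and_iff hΔ hne).mp hcχ₁).2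
    exact nsv_trans hΔ hne hdχ hn₁ (nsv_symm hΔ hne hn₂)
  · intro hor
    have hset : {n | ∃ χ, (Formula.nabla i χ d).and (Formula.dia i χ) ∈ Δ ∧
        Formula.nabla i (φ.or χ) d ∈ Δ ∧ enc χ = n} =
        {n | ∃ χ, (Formula.nabla i χ d).and (Formula.dia i χ) ∈ Δ ∧
        Formula.nabla i (ψ.or χ) d ∈ Δ ∧ enc χ = n} := by
      ext n
      constructor
      · rintro ⟨χ, hcχ, hn, rfl⟩
        exact ⟨χ, hcχ, nsv_trans hΔ hne hdφ (nsv_symm hΔ hne hor) hn, rfl⟩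
      · rintro ⟨χ, hcχ, hn, rfl⟩
        exact ⟨χ, hcχ, nsv_trans hΔ hne hdψ hor hn, rfl⟩
    rw [hset]

end GTwo

/-! ### CWorld-level lemmas -/

lemma mcs_thm {Γ : Set Formula} (hΓ : MCS Γ) (hne : Γ.Nonempty) {φ : Formula}
    (hd : Derivable φ) : φ ∈ Γ := by
  obtain ⟨γ₀, hγ₀⟩ := hne
  exact mcs_mp1 hΓ ⟨γ₀, hγ₀⟩ hγ₀ (Derivable.imp_of γ₀ hd)

/-- From ¬∇_i(ψ,d) ∈ Γ we get ◇_iψ ∈ Γ. -/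
lemma dia_of_neg_nabla {Γ : Set Formula} (hΓ : MCS Γ) {i : ℕ} {ψ : Formula} {d : ℕ}
    (h : (Formula.nabla i ψ d).neg ∈ Γ) : Formula.dia i ψ ∈ Γ := by
  have hne : Γ.Nonempty := ⟨_, h⟩
  by_contra hc
  have hb : Formula.box i ψ.neg ∈ Γ := mcs_mem_of_neg_not_mem hΓ hne hc
  have hb2 : Formula.box i (ψ.imp Formula.bot) ∈ Γ := by
    refine mcs_mp1 hΓ hne hb (Derivable.box_mono i (Derivable.taut ?_))
    intro v hT hN hA
    simp only [v_imp hN hA, hN, v_bot hT hN]; tauto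
  have hnb : Formula.nabla i Formula.bot d ∈ Γ := mcs_thm hΓ hne (Derivable.nsvBot i d)
  have hnab : Formula.nabla i ψ d ∈ Γ :=
    mcs_mp2 hΓ hne hb2 hnb (Derivable.distNsv i ψ Formula.bot d)
  exact mcs_not_both hΓ hnab h

/-- ◇_iψ ∈ Γ implies consistency of {χ : □_iχ ∈ Γ} ∪ {ψ}. -/
lemma cons_of_dia {Γ : Set Formula} (hΓ : MCS Γ) (hne : Γ.Nonempty) {i : ℕ} {ψ : Formula}
    (hd : Formula.dia i ψ ∈ Γ) : Consistent ({χ | Formula.box i χ ∈ Γ} ∪ {ψ}) := by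
  classical
  rintro ⟨l, hlne, hlsub, hld⟩
  set θl := l.filter (fun χ => χ ≠ ψ) with hθl
  have hθmem : ∀ χ ∈ θl, Formula.box i χ ∈ Γ := by
    intro χ hχ
    obtain ⟨hχl, hχψ⟩ := List.mem_filter.mp hχ
    rcases hlsub χ hχl with hh | hh
    · exact hh
    · simp only [Set.mem_singleton_iff] at hh
      subst hh
      simp at hχψ
  have hder : Derivable ((conj θl).imp ψ.neg) := by
    refine Derivable.taut1 ?_ hld
    intro v hT hN hA
    simp only [v_imp hN hA, hN, v_conj hT hA]
    intro hnl hθ hψv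
    apply hnl
    intro χ hχ
    by_cases hcf : χ = ψ
    · exact hcf ▸ hψv
    · exact hθ χ (List.mem_filter.mpr ⟨hχ, by simp [hcf]⟩)
  have hder2 : Derivable ((conj (θl.map (Formula.box i))).imp (Formula.box i ψ.neg)) :=
    Derivable.imp_trans (Derivable.conj_box i θl) (Derivable.box_mono i hder)
  have hbox : Formula.box i ψ.neg ∈ Γ := by
    refine mcs_mem hΓ hne ⟨θl.map (Formula.box i), ?_, hder2⟩
    intro χ hχ
    obtain ⟨χ', hχ', rfl⟩ := List.mem_map.mp hχ
    exact hθmem χ' hχ'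
  exact mcs_not_both hΓ hbox hd

/-- the common value of g_s over the formulas of Δ that are ∇'d in Γ_s. -/
lemma common_value (s : CWorld) (i : ℕ) {Δ : Set Formula} (hΔ : MCS Δ) (hneΔ : Δ.Nonempty)
    (hΘ : ∀ χ, Formula.box i χ ∈ s.Γ → χ ∈ Δ) (hnes : s.Γ.Nonempty) (d' : ℕ) :
    ∃ n, ∀ φ, Formula.nabla i φ d' ∈ s.Γ → φ ∈ Δ → s.g i φ d' = some n := by
  have smcs := s.mcs
  by_cases hE : ∃ φ₀, Formula.nabla i φ₀ d' ∈ s.Γ ∧ φ₀ ∈ Δ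
  · obtain ⟨φ₀, hn0, hm0⟩ := hE
    have hdia : ∀ φ, φ ∈ Δ → Formula.dia i φ ∈ s.Γ := by
      intro φ hφ
      by_contra hc
      have hb : Formula.box i φ.neg ∈ s.Γ := mcs_mem_of_neg_not_mem smcs hnes hc
      exact mcs_not_both hΔ hφ (hΘ _ hb)
    have hc0 : (Formula.nabla i φ₀ d').and (Formula.dia i φ₀) ∈ s.Γ :=
      (mcs_and_iff smcs hnes).mpr ⟨hn0, hdia φ₀ hm0⟩
    have h0ne : s.g i φ₀ d' ≠ none := (s.cond1 i φ₀ d').mpr hc0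
    obtain ⟨n, hn⟩ : ∃ n, s.g i φ₀ d' = some n := Option.ne_none_iff_exists'.mp h0ne
    refine ⟨n, ?_⟩
    intro φ hnφ hmφ
    have hcφ : (Formula.nabla i φ d').and (Formula.dia i φ) ∈ s.Γ :=
      (mcs_and_iff smcs hnes).mpr ⟨hnφ, hdia φ hmφ⟩
    have hφne : s.g i φ d' ≠ none := (s.cond1 i φ d').mpr hcφ
    have hdand : Formula.dia i (φ₀.and φ) ∈ s.Γ := by
      by_contra hc
      have hb : Formula.box i (φ₀.and φ).neg ∈ s.Γ := mcs_mem_of_neg_not_mem smcs hnes hc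
      have hmem : φ₀.and φ ∈ Δ := (mcs_and_iff hΔ hneΔ).mpr ⟨hm0, hmφ⟩
      exact mcs_not_both hΔ hmem (hΘ _ hb)
    have hor : Formula.nabla i (φ₀.or φ) d' ∈ s.Γ :=
      mcs_mp3 smcs hnes hdand hn0 hnφ (curry3 (Derivable.nsvOr i φ₀ φ d'))
    have heq := (s.cond2 i φ₀ φ d' h0ne hφne).mpr hor
    rw [← heq, hn]
  · exact ⟨0, fun φ h1 h2 => absurd ⟨φ, h1, h2⟩ hE⟩

/-- building a canonical world from an MCS and a value function. -/
noncomputable def mkW (Δ : Set Formula) (hΔ : MCS Δ) (hne : Δ.Nonempty) (f : ℕ → ℕ) : CWorld :=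
  ⟨Δ, f, gMk Δ, hΔ, gMk_cond1 Δ, fun i φ ψ d h1 h2 => gMk_cond2 hΔ hne h1 h2⟩

open Classical in
/-- classifier for the inconsistency extraction. -/
noncomputable def pick (s : CWorld) (i d v : ℕ) : Formula → Option Formula
  | Formula.neg φ =>
      if Formula.box i (Formula.neg φ) ∈ s.Γ then none
      else if Formula.nabla i φ d ∈ s.Γ ∧ s.g i φ d = some v then some φ else none
  | _ => none

lemma pick_spec {s : CWorld} {i d v : ℕ} {χ φ : Formula} (h : pick s i d v χ = some φ) :
    χ = Formula.neg φ ∧ Formula.nabla i φ d ∈ s.Γ ∧ s.g i φ d = some v := by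
  cases χ with
  | neg φ' =>
      simp only [pick] at h
      split at h
      · simp at h
      · split at h
        · obtain rfl : φ' = φ := by simpa using h
          exact ⟨rfl, by assumption⟩
        · simp at h
  | top => simp [pick] at h
  | atom p => simp [pick] at h
  | and a b => simp [pick] at h
  | box j a => simp [pick] at h
  | nabla j a e => simp [pick] at h

lemma pick_pos {s : CWorld} {i d v : ℕ} {φ : Formula}
    (hbox : Formula.box i (Formula.neg φ) ∉ s.Γ)
    (h1 : Formula.nabla i φ d ∈ s.Γ) (h2 : s.g i φ d = some v) :
    pick s i d v (Formula.neg φ) = some φ := by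
  simp only [pick]
  rw [if_neg hbox, if_pos ⟨h1, h2⟩]

/-- ∇ of a disjunction of formulas with common g-value. -/
lemma big_disj (s : CWorld) (hnes : s.Γ.Nonempty) (i d v : ℕ) :
    ∀ L : List Formula, L ≠ [] →
      (∀ φ ∈ L, Formula.nabla i φ d ∈ s.Γ ∧ s.g i φ d = some v) →
      Formula.nabla i (disj L) d ∈ s.Γ ∧ s.g i (disj L) d = some v
  | [], hL, _ => absurd rfl hL
  | [φ], _, hall => by simpa [disj] using hall φ (by simp)
  | φ :: χ :: L, _, hall => by
      have smcs := s.mcs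
      obtain ⟨hD, hgD⟩ := big_disj s hnes i d v (χ :: L) (by simp)
        (fun ρ hρ => hall ρ (List.mem_cons_of_mem _ hρ))
      obtain ⟨hnφ, hgφ⟩ := hall φ (by simp)
      set D := disj (χ :: L) with hDdef
      have hφne : s.g i φ d ≠ none := by rw [hgφ]; simp
      have hDne : s.g i D d ≠ none := by rw [hgD]; simp
      have hor : Formula.nabla i (φ.or D) d ∈ s.Γ :=
        (s.cond2 i φ D d hφne hDne).mp (by rw [hgφ, hgD])
      have hdφ : Formula.dia i φ ∈ s.Γ :=
        ((mcs_and_iff smcs hnes).mp ((s.cond1 i φ d).mp hφne)).2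
      have hdbig : Formula.dia i (φ.or D) ∈ s.Γ := by
        refine mcs_mp1 smcs hnes hdφ (Derivable.dia_mono i (Derivable.taut ?_))
        intro v' hT hN hA; simp only [v_imp hN hA, v_or hN hA]; tauto
      have hgbigne : s.g i (φ.or D) d ≠ none :=
        (s.cond1 i (φ.or D) d).mpr ((mcs_and_iff smcs hnes).mpr ⟨hor, hdbig⟩)
      have hor2 : Formula.nabla i ((φ.or D).or φ) d ∈ s.Γ := by
        refine mcs_mp1 smcs hnes hor (Derivable.nsv_mono i d (Derivable.taut ?_))
        intro v' hT hN hA; simp only [v_imp hN hA, v_or hN hA]; tauto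
      have hgbig : s.g i (φ.or D) d = s.g i φ d :=
        (s.cond2 i (φ.or D) φ d hgbigne hφne).mpr hor2
      have : disj (φ :: χ :: L) = φ.or D := by rw [disj]
      rw [this]
      exact ⟨hor, by rw [hgbig, hgφ]⟩

/-- existence lemma for ¬∇: if ¬∇_i(ψ,d) ∈ Γ_s then there are
canonical worlds t₁, t₂ with ψ ∈ Γ_{t₁}, ψ ∈ Γ_{t₂}, s R_i t₁, s R_i t₂ and
f_{t₁}(d) ≠ f_{t₂}(d). -/
theorem existence_lemma_nabla (s : CWorld) (i : ℕ) (ψ : Formula) (d : ℕ)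
    (h : Formula.neg (Formula.nabla i ψ d) ∈ s.Γ) :
    ∃ t₁ t₂ : CWorld, ψ ∈ t₁.Γ ∧ ψ ∈ t₂.Γ ∧ CRel i s t₁ ∧ CRel i s t₂ ∧
      t₁.f d ≠ t₂.f d := by
  classical
  have smcs := s.mcs
  have hsne : s.Γ.Nonempty := ⟨_, h⟩
  have hdψ : Formula.dia i ψ ∈ s.Γ := dia_of_neg_nabla smcs h
  have hcons1 : Consistent ({χ | Formula.box i χ ∈ s.Γ} ∪ {ψ}) := cons_of_dia smcs hsne hdψ
  obtain ⟨Δ₁, hsub1, hΔ₁⟩ := lindenbaum hcons1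
  have hψ1 : ψ ∈ Δ₁ := hsub1 (Or.inr rfl)
  have hne1 : Δ₁.Nonempty := ⟨ψ, hψ1⟩
  have hΘ1 : ∀ χ, Formula.box i χ ∈ s.Γ → χ ∈ Δ₁ := fun χ hχ => hsub1 (Or.inl hχ)
  choose f₁ hf₁ using common_value s i hΔ₁ hne1 hΘ1 hsne
  set v := f₁ d with hv
  set T₂ : Set Formula := ({χ | Formula.box i χ ∈ s.Γ} ∪ {ψ}) ∪
    {χ | ∃ φ, (Formula.nabla i φ d ∈ s.Γ ∧ s.g i φ d = some v) ∧ χ = Formula.neg φ} with hT₂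
  by_cases hT : Consistent T₂
  · -- T₂ consistent: build the two worlds
    obtain ⟨Δ₂, hsub2, hΔ₂⟩ := lindenbaum hT
    have hψ2 : ψ ∈ Δ₂ := hsub2 (Or.inl (Or.inr rfl))
    have hne2 : Δ₂.Nonempty := ⟨ψ, hψ2⟩
    have hΘ2 : ∀ χ, Formula.box i χ ∈ s.Γ → χ ∈ Δ₂ := fun χ hχ => hsub2 (Or.inl (Or.inl hχ))
    choose f₂ hf₂ using common_value s i hΔ₂ hne2 hΘ2 hsne
    have hd2 : ∃ n₂, n₂ ≠ v ∧
        ∀ φ, Formula.nabla i φ d ∈ s.Γ → φ ∈ Δ₂ → s.g i φ d = some n₂ := by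
      by_cases hE : ∃ φ, Formula.nabla i φ d ∈ s.Γ ∧ φ ∈ Δ₂
      · obtain ⟨φ₀, hn0, hm0⟩ := hE
        refine ⟨f₂ d, ?_, hf₂ d⟩
        intro hEq
        have hg0 : s.g i φ₀ d = some v := by rw [hf₂ d φ₀ hn0 hm0, hEq]
        have hneg : Formula.neg φ₀ ∈ Δ₂ := hsub2 (Or.inr ⟨φ₀, ⟨hn0, hg0⟩, rfl⟩)
        exact mcs_not_both hΔ₂ hm0 hneg
      · exact ⟨v + 1, by omega, fun φ h1 h2 => absurd ⟨φ, h1, h2⟩ hE⟩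
    obtain ⟨n₂, hn₂ne, hn₂⟩ := hd2
    refine ⟨mkW Δ₁ hΔ₁ hne1 f₁,
      mkW Δ₂ hΔ₂ hne2 (fun d' => if d' = d then n₂ else f₂ d'),
      hψ1, hψ2, ⟨hΘ1, ?_⟩, ⟨hΘ2, ?_⟩, ?_⟩
    · intro φ d' h1 h2
      exact hf₁ d' φ h1 h2
    · intro φ d' h1 h2
      show s.g i φ d' = some (if d' = d then n₂ else f₂ d')
      by_cases hdd : d' = d
      · subst hdd
        rw [if_pos rfl]
        exact hn₂ φ h1 h2
      · rw [if_neg hdd]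
        exact hf₂ d' φ h1 h2
    · show f₁ d ≠ (if d = d then n₂ else f₂ d)
      rw [if_pos rfl]
      intro hh
      exact hn₂ne (by rw [hv, ← hh])
  · -- T₂ inconsistent: derive a contradiction
    exfalso
    obtain ⟨l, hlne, hlsub, hld⟩ := not_not.mp hT
    set θl := l.filter (fun χ => Formula.box i χ ∈ s.Γ) with hθl
    set Φl := l.filterMap (pick s i d v) with hΦl
    have hθmem : ∀ χ ∈ θl, Formula.box i χ ∈ s.Γ := by
      intro χ hχ
      have := (List.mem_filter.mp hχ).2
      simpa using this
    have hclass : ∀ χ ∈ l, Formula.box i χ ∈ s.Γ ∨ χ = ψ ∨ ∃ φ ∈ Φl, χ = Formula.neg φ := by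
      intro χ hχ
      have hmem := hlsub χ hχ
      rw [hT₂] at hmem
      rcases hmem with (hb | hψ') | ⟨φ, ⟨hnφ, hgφ⟩, rfl⟩
      · exact Or.inl hb
      · exact Or.inr (Or.inl hψ')
      · by_cases hbox : Formula.box i (Formula.neg φ) ∈ s.Γ
        · exact Or.inl hbox
        · exact Or.inr (Or.inr ⟨φ,
            List.mem_filterMap.mpr ⟨_, hχ, pick_pos hbox hnφ hgφ⟩, rfl⟩)
    have hΦmem : ∀ φ ∈ Φl, Formula.nabla i φ d ∈ s.Γ ∧ s.g i φ d = some v := by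
      intro φ hφ
      obtain ⟨χ, hχl, hpick⟩ := List.mem_filterMap.mp hφ
      exact (pick_spec hpick).2
    have hder : Derivable ((conj θl).imp (ψ.imp (disj Φl))) := by
      refine Derivable.taut1 ?_ hld
      intro v' hT' hN hA
      simp only [v_imp hN hA, hN, v_conj hT' hA, v_disj hT' hN hA]
      intro hnl hθ hψv
      by_contra hnd
      apply hnl
      intro χ hχ
      rcases hclass χ hχ with hb | rfl | ⟨φ, hφΦ, rfl⟩
      · exact hθ χ (List.mem_filter.mpr ⟨hχ, by simpa using hb⟩)
      · exact hψv
      · rw [hN]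
        intro hvφ
        exact hnd ⟨φ, hφΦ, hvφ⟩
    have hder2 : Derivable ((conj (θl.map (Formula.box i))).imp
        (Formula.box i (ψ.imp (disj Φl)))) :=
      Derivable.imp_trans (Derivable.conj_box i θl) (Derivable.box_mono i hder)
    have hboxΓ : Formula.box i (ψ.imp (disj Φl)) ∈ s.Γ := by
      refine mcs_mem smcs hsne ⟨θl.map (Formula.box i), ?_, hder2⟩
      intro χ hχ
      obtain ⟨χ', hχ', rfl⟩ := List.mem_map.mp hχ
      exact hθmem χ' hχ'
    have hnabψ : Formula.nabla i ψ d ∈ s.Γ := by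
      by_cases hΦE : Φl = []
      · rw [hΦE] at hboxΓ
        have hnb : Formula.nabla i Formula.bot d ∈ s.Γ := mcs_thm smcs hsne (Derivable.nsvBot i d)
        exact mcs_mp2 smcs hsne hboxΓ hnb (Derivable.distNsv i ψ Formula.bot d)
      · have hD := big_disj s hsne i d v Φl hΦE hΦmem
        exact mcs_mp2 smcs hsne hboxΓ hD.1 (Derivable.distNsv i ψ (disj Φl) d)
    exact mcs_not_both smcs hnabψ h
end

section
/- Let s be a maximal consistent set with respect to SLKvr with ¬∇_i(ψ,d) ∈ s, and let A⁺ = {φ : □_iφ ∈ s} ∪ {ψ}. Then A⁺ is consistent with respect to SLKvr. -/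
section Aux

/-- Semantics of conj under a valuation, cons form. -/
lemma conj_cons_eval (v : Formula → Prop) (ht : v Formula.top)
    (ha : ∀ ψ χ, v (Formula.and ψ χ) ↔ (v ψ ∧ v χ)) (φ : Formula) (l : List Formula) :
    v (conj (φ :: l)) ↔ v φ ∧ v (conj l) := by
  cases l with
  | nil => simp [conj, ht]
  | cons ψ l => simp [conj, ha]

/-- Semantics of conj under a valuation, membership form. -/
lemma conj_eval (v : Formula → Prop) (ht : v Formula.top)
    (ha : ∀ ψ χ, v (Formula.and ψ χ) ↔ (v ψ ∧ v χ)) :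
    ∀ l : List Formula, v (conj l) ↔ ∀ φ ∈ l, v φ := by
  intro l
  induction l with
  | nil => simpa [conj]
  | cons φ l ih =>
      rw [conj_cons_eval v ht ha, ih]
      simp

lemma derivable_imp_trans {φ ψ χ : Formula}
    (h1 : Derivable (φ.imp ψ)) (h2 : Derivable (ψ.imp χ)) : Derivable (φ.imp χ) := by
  have t : Taut ((φ.imp ψ).imp ((ψ.imp χ).imp (φ.imp χ))) := by
    intro v ht hn ha
    simp only [Formula.imp, hn, ha]
    tauto
  exact Derivable.mp (Derivable.mp (Derivable.taut t) h1) h2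

lemma derivable_top : Derivable Formula.top := by
  exact Derivable.taut (fun v ht hn ha => ht)

lemma derivable_top_imp {φ : Formula} (h : Derivable φ) : Derivable (Formula.top.imp φ) := by
  have t : Taut (φ.imp (Formula.top.imp φ)) := by
    intro v ht hn ha
    simp only [Formula.imp, hn, ha]
    tauto
  exact Derivable.mp (Derivable.taut t) h

/-- Deduction-style lemma: from conj m → χ derive conj (□m) → □χ. -/
lemma box_deduction (i : ℕ) :
    ∀ (m : List Formula) (χ : Formula), Derivable ((conj m).imp χ) →
      Derivable ((conj (m.map (Formula.box i))).imp (Formula.box i χ)) := by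
  intro m
  induction m with
  | nil =>
      intro χ h
      have hχ : Derivable χ := Derivable.mp h derivable_top
      exact derivable_top_imp (Derivable.nec i hχ)
  | cons φ rest ih =>
      intro χ h
      -- from conj (φ :: rest) → χ derive conj rest → (φ → χ)
      have t1 : Taut (((conj (φ :: rest)).imp χ).imp ((conj rest).imp (φ.imp χ))) := by
        intro v ht hn ha
        have hc := conj_cons_eval v ht ha φ rest
        simp only [Formula.imp, hn, ha] at *
        tauto
      have h1 : Derivable ((conj rest).imp (φ.imp χ)) :=
        Derivable.mp (Derivable.taut t1) h
      have h2 := ih (φ.imp χ) h1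
      have h3 : Derivable ((conj (rest.map (Formula.box i))).imp
          ((Formula.box i φ).imp (Formula.box i χ))) :=
        derivable_imp_trans h2 (Derivable.axK i φ χ)
      have t2 : Taut (((conj (rest.map (Formula.box i))).imp
          ((Formula.box i φ).imp (Formula.box i χ))).imp
          ((conj ((φ :: rest).map (Formula.box i))).imp (Formula.box i χ))) := by
        intro v ht hn ha
        have hc := conj_cons_eval v ht ha (Formula.box i φ) (rest.map (Formula.box i))
        simp only [List.map_cons] at *
        simp only [Formula.imp, hn, ha] at *
        tauto
      exact Derivable.mp (Derivable.taut t2) h3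

end Aux

/-- if s is an MCS with ¬∇_i(ψ,d) ∈ s, then
A⁺ = {φ : □_iφ ∈ s} ∪ {ψ} is consistent. -/
theorem aplus_consistent (s : Set Formula) (hs : MCS s) (i : ℕ) (ψ : Formula)
    (d : ℕ) (h : Formula.neg (Formula.nabla i ψ d) ∈ s) :
    Consistent ({φ | Formula.box i φ ∈ s} ∪ {ψ}) := by
  rintro ⟨l, hne, hmem, hder⟩
  classical
  set m : List Formula := l.filter (fun φ => φ ≠ ψ) with hm
  -- Step 1: conj m → ¬ψ
  have t1 : Taut ((Formula.neg (conj l)).imp ((conj m).imp (Formula.neg ψ))) := by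
    intro v ht hn ha
    have hl := conj_eval v ht ha l
    have hmv := conj_eval v ht ha m
    have hkey : v (conj m) → v ψ → v (conj l) := by
      intro hvm hvψ
      rw [hl]
      intro φ hφ
      by_cases hc : φ = ψ
      · subst hc; exact hvψ
      · have hφm : φ ∈ m := by
          rw [hm, List.mem_filter]
          exact ⟨hφ, by simp [hc]⟩
        exact hmv.mp hvm φ hφm
    simp only [Formula.imp, hn, ha]
    tauto
  have h1 : Derivable ((conj m).imp (Formula.neg ψ)) :=
    Derivable.mp (Derivable.taut t1) hder
  -- Step 2: conj (□m) → □¬ψ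
  have h2 := box_deduction i m (Formula.neg ψ) h1
  -- Step 3: □¬ψ → □(ψ → ⊥)
  have t3 : Taut ((Formula.neg ψ).imp (ψ.imp Formula.bot)) := by
    intro v ht hn ha
    simp only [Formula.imp, Formula.bot, hn, ha]
    tauto
  have h3 : Derivable ((Formula.box i (Formula.neg ψ)).imp
      (Formula.box i (ψ.imp Formula.bot))) :=
    Derivable.mp (Derivable.axK i (Formula.neg ψ) (ψ.imp Formula.bot))
      (Derivable.nec i (Derivable.taut t3))
  -- Step 4: □(ψ → ⊥) → ∇_i(ψ,d)
  have hdist := Derivable.distNsv i ψ Formula.bot d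
  have tswap : Taut (((Formula.box i (ψ.imp Formula.bot)).imp
      ((Formula.nabla i Formula.bot d).imp (Formula.nabla i ψ d))).imp
      ((Formula.nabla i Formula.bot d).imp
        ((Formula.box i (ψ.imp Formula.bot)).imp (Formula.nabla i ψ d)))) := by
    intro v ht hn ha
    simp only [Formula.imp, hn, ha]
    tauto
  have h4 : Derivable ((Formula.box i (ψ.imp Formula.bot)).imp (Formula.nabla i ψ d)) :=
    Derivable.mp (Derivable.mp (Derivable.taut tswap) hdist) (Derivable.nsvBot i d)
  -- Chain: conj (□m) → ∇_i(ψ,d)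
  have h5 : Derivable ((conj (m.map (Formula.box i))).imp (Formula.nabla i ψ d)) :=
    derivable_imp_trans (derivable_imp_trans h2 h3) h4
  -- Step 5: contradiction with consistency of s
  set M : List Formula := m.map (Formula.box i) with hM
  set L : List Formula := Formula.neg (Formula.nabla i ψ d) :: M with hL
  have t6 : Taut (((conj M).imp (Formula.nabla i ψ d)).imp (Formula.neg (conj L))) := by
    intro v ht hn ha
    have hc := conj_cons_eval v ht ha (Formula.neg (Formula.nabla i ψ d)) M
    rw [hL]
    simp only [Formula.imp, hn, ha] at *
    tauto
  have h6 : Derivable (Formula.neg (conj L)) := Derivable.mp (Derivable.taut t6) h5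
  apply hs.1
  refine ⟨L, by simp [hL], ?_, h6⟩
  intro φ hφ
  rw [hL] at hφ
  rcases List.mem_cons.mp hφ with hφ | hφ
  · subst hφ; exact h
  · rw [hM] at hφ
    rcases List.mem_map.mp hφ with ⟨χ, hχm, rfl⟩
    have hχl : χ ∈ l ∧ χ ≠ ψ := by
      have := List.mem_filter.mp (hm ▸ hχm)
      simpa using this
    rcases hmem χ hχl.1 with hb | hb
    · exact hb
    · exact absurd hb hχl.2
end
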